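/- arXiv:math/0602259 — 3 statements merged into one kernel-verified Lean document; each statement's English description precedes it below -/
import Mathlib

section
/- In a cluster pattern of geometric type, the elements ŷ_{j;w} = ∏_{i=1}^m x_{i;w}^{b^w_{ij}} form a Y-pattern in the ambient field: for every sequence w, every k ∈ {1,…,n}, and w' = w·k, one has ŷ_{k;w'} = ŷ_{k;w}^{−1}, and ŷ_{j;w'} = ŷ_{j;w} · ŷ_{k;w}^{[b^w_{kj}]₊} · (ŷ_{k;w} + 1)^{−b^w_{kj}} for every j ≠ k. -/
/-!
Statement 1 (Fomin–Zelevinsky, "Cluster algebras IV", Proposition 3.9):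
In a cluster pattern of geometric type, the elements
`ŷ_{j;w} = ∏_{i=1}^m x_{i;w}^{b^w_{ij}}` form a `Y`-pattern in the ambient field.
-/

open scoped BigOperators

noncomputable section

/-- The ambient field `ℚ(x₁,…,x_m)`. -/
abbrev GField (m : ℕ) : Type := FractionRing (MvPolynomial (Fin m) ℚ)

/-- The variable `xᵢ`. -/
def gx (m : ℕ) (i : Fin m) : GField m :=
  algebraMap (MvPolynomial (Fin m) ℚ) (GField m) (MvPolynomial.X i)

/-- Mutation of the rectangular `m × n` extended exchange matrix in direction `k`. -/
def matMutG {m n : ℕ} (hmn : n ≤ m) (B : Matrix (Fin m) (Fin n) ℤ) (k : Fin n) :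
    Matrix (Fin m) (Fin n) ℤ :=
  Matrix.of fun i j =>
    if i = Fin.castLE hmn k ∨ j = k then -B i j
    else B i j + Int.sign (B i k) * max (B i k * B (Fin.castLE hmn k) j) 0

/-- The extended tuple `(x_{1;w},…,x_{m;w})`: the cluster variables followed by the
frozen variables `x_{n+1},…,x_m`. -/
def xext {m n : ℕ} (X : Fin n → GField m) (i : Fin m) : GField m :=
  if h : (i : ℕ) < n then X ⟨i, h⟩ else gx m i

/-- One exchange (mutation) step for the cluster variables (geometric type). -/
def XstepG {m n : ℕ} (B : Matrix (Fin m) (Fin n) ℤ)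
    (X : Fin n → GField m) (k : Fin n) : Fin n → GField m :=
  fun l =>
    if l = k then
      ((∏ i, xext X i ^ (B i k).toNat) + ∏ i, xext X i ^ (-(B i k)).toNat) / X k
    else X l

/-- The labeled seed attached to the mutation sequence `w`. -/
def seedG {m n : ℕ} (hmn : n ≤ m) (B0 : Matrix (Fin m) (Fin n) ℤ) (w : List (Fin n)) :
    Matrix (Fin m) (Fin n) ℤ × (Fin n → GField m) :=
  w.foldl (fun p k => (matMutG hmn p.1 k, XstepG p.1 p.2 k))
    (B0, fun l => gx m (Fin.castLE hmn l))

/-- The extended exchange matrix `B̃_w`. -/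
def BmatG {m n : ℕ} (hmn : n ≤ m) (B0 : Matrix (Fin m) (Fin n) ℤ) (w : List (Fin n)) :
    Matrix (Fin m) (Fin n) ℤ := (seedG hmn B0 w).1

/-- The cluster variable `x_{ℓ;w}`. -/
def XvarG {m n : ℕ} (hmn : n ≤ m) (B0 : Matrix (Fin m) (Fin n) ℤ) (w : List (Fin n)) :
    Fin n → GField m := (seedG hmn B0 w).2

/-- `ŷ_{j;w} = ∏_{i=1}^m x_{i;w}^{b^w_{ij}}`. -/
def yhatG {m n : ℕ} (hmn : n ≤ m) (B0 : Matrix (Fin m) (Fin n) ℤ) (w : List (Fin n))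
    (j : Fin n) : GField m :=
  ∏ i, xext (XvarG hmn B0 w) i ^ (BmatG hmn B0 w i j)

/-! ### Auxiliary material -/

lemma sign_mul_max_eq (a b : ℤ) :
    a.sign * max (a * b) 0 = max a 0 * max b 0 - max (-a) 0 * max (-b) 0 := by
  rcases lt_trichotomy a 0 with ha | ha | ha
  · rw [Int.sign_eq_neg_one_of_neg ha, max_eq_right ha.le, max_eq_left (by linarith : (0:ℤ) ≤ -a)]
    rcases le_or_gt b 0 with hb | hb
    · rw [max_eq_left (by nlinarith : (0:ℤ) ≤ a*b),
        max_eq_right hb, max_eq_left (by linarith : (0:ℤ) ≤ -b)]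
      ring
    · rw [max_eq_right (by nlinarith : a*b ≤ 0), max_eq_left hb.le,
        max_eq_right (by linarith : -b ≤ 0)]
      ring
  · simp [ha]
  · rw [Int.sign_eq_one_of_pos ha, max_eq_left ha.le, max_eq_right (by linarith : -a ≤ 0)]
    rcases le_or_gt b 0 with hb | hb
    · rw [max_eq_right (by nlinarith : a*b ≤ 0), max_eq_right hb,
        max_eq_left (by linarith : (0:ℤ) ≤ -b)]
      ring
    · rw [max_eq_left (by positivity : (0:ℤ) ≤ a*b), max_eq_left hb.le,
        max_eq_right (by linarith : -b ≤ 0)]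
      ring

/-- Skew-symmetrizability of the principal `n × n` part. -/
def SkewD {m n : ℕ} (hmn : n ≤ m) (d : Fin n → ℤ) (B : Matrix (Fin m) (Fin n) ℤ) : Prop :=
  ∀ i j : Fin n, d i * B (Fin.castLE hmn i) j = -(d j * B (Fin.castLE hmn j) i)

lemma pos_mul_max (e x : ℤ) (he : 0 ≤ e) : e * max x 0 = max (e * x) 0 := by
  rw [mul_max_of_nonneg _ _ he, mul_zero]

lemma SkewD.mut {m n : ℕ} {hmn : n ≤ m} {d : Fin n → ℤ} {B : Matrix (Fin m) (Fin n) ℤ}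
    (hd : ∀ i, 0 < d i) (h : SkewD hmn d B) (k : Fin n) : SkewD hmn d (matMutG hmn B k) := by
  intro i j
  have hinj : Function.Injective (Fin.castLE hmn) := Fin.castLE_injective hmn
  by_cases hik : i = k
  · subst hik
    simp only [matMutG, Matrix.of_apply, eq_self_iff_true, true_or, or_true, if_true]
    linarith [h i j]
  · by_cases hjk : j = k
    · subst hjk
      simp only [matMutG, Matrix.of_apply, eq_self_iff_true, true_or, or_true, if_true]
      linarith [h i j]
    · have hci : ¬ (Fin.castLE hmn i = Fin.castLE hmn k ∨ j = k) := by
        rintro (hc | hc); exact hik (hinj hc); exact hjk hc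
      have hcj : ¬ (Fin.castLE hmn j = Fin.castLE hmn k ∨ i = k) := by
        rintro (hc | hc); exact hjk (hinj hc); exact hik hc
      simp only [matMutG, Matrix.of_apply, if_neg hci, if_neg hcj]
      rw [sign_mul_max_eq, sign_mul_max_eq]
      set A := B (Fin.castLE hmn i) k with hA
      set A' := B (Fin.castLE hmn j) k with hA'
      set C := B (Fin.castLE hmn k) j with hC
      set C' := B (Fin.castLE hmn k) i with hC'
      have h1 : d i * max A 0 = d k * max (-C') 0 := by
        rw [pos_mul_max _ _ (hd i).le, pos_mul_max _ _ (hd k).le, h i k]; ring_nf; rfl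
      have h2 : d i * max (-A) 0 = d k * max C' 0 := by
        rw [pos_mul_max _ _ (hd i).le, pos_mul_max _ _ (hd k).le]
        have := h i k; congr 1; linarith
      have h3 : d j * max A' 0 = d k * max (-C) 0 := by
        rw [pos_mul_max _ _ (hd j).le, pos_mul_max _ _ (hd k).le, h j k]; ring_nf; rfl
      have h4 : d j * max (-A') 0 = d k * max C 0 := by
        rw [pos_mul_max _ _ (hd j).le, pos_mul_max _ _ (hd k).le]
        have := h j k; congr 1; linarith
      have h5 := h i j
      linear_combination h5 + max C 0 * h1 - max (-C) 0 * h2 + max C' 0 * h3 - max (-C') 0 * h4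

/-! ### Positivity in the ambient field -/

def PosP {m : ℕ} (p : MvPolynomial (Fin m) ℚ) : Prop := p ≠ 0 ∧ ∀ s, 0 ≤ p.coeff s

lemma PosP.one {m : ℕ} : PosP (1 : MvPolynomial (Fin m) ℚ) := by
  constructor
  · exact one_ne_zero
  · intro s
    rw [MvPolynomial.coeff_one]
    positivity

lemma PosP.X {m : ℕ} (i : Fin m) : PosP (MvPolynomial.X i : MvPolynomial (Fin m) ℚ) := by
  constructor
  · exact MvPolynomial.X_ne_zero i
  · intro s
    rw [MvPolynomial.coeff_X']
    positivity

lemma PosP.add {m : ℕ} {p q : MvPolynomial (Fin m) ℚ} (hp : PosP p) (hq : PosP q) :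
    PosP (p + q) := by
  obtain ⟨s, hs⟩ := MvPolynomial.ne_zero_iff.mp hp.1
  have hps : 0 < p.coeff s := lt_of_le_of_ne (hp.2 s) (Ne.symm hs)
  constructor
  · apply MvPolynomial.ne_zero_iff.mpr
    refine ⟨s, ?_⟩
    rw [MvPolynomial.coeff_add]
    have := hq.2 s
    intro hc
    nlinarith
  · intro t; rw [MvPolynomial.coeff_add]; exact add_nonneg (hp.2 t) (hq.2 t)

lemma PosP.mul {m : ℕ} {p q : MvPolynomial (Fin m) ℚ} (hp : PosP p) (hq : PosP q) :
    PosP (p * q) := by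
  refine ⟨mul_ne_zero hp.1 hq.1, fun s => ?_⟩
  rw [MvPolynomial.coeff_mul]
  exact Finset.sum_nonneg fun x _ => mul_nonneg (hp.2 x.1) (hq.2 x.2)

/-- An element of the ambient field is “positive’’ if it is a ratio of nonzero
polynomials with nonnegative coefficients. -/
def Pos {m : ℕ} (x : GField m) : Prop :=
  ∃ p q : MvPolynomial (Fin m) ℚ, PosP p ∧ PosP q ∧
    x = algebraMap (MvPolynomial (Fin m) ℚ) (GField m) p /
        algebraMap (MvPolynomial (Fin m) ℚ) (GField m) q

lemma map_ne_zero' {m : ℕ} {p : MvPolynomial (Fin m) ℚ} (hp : p ≠ 0) :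
    algebraMap (MvPolynomial (Fin m) ℚ) (GField m) p ≠ 0 := by
  simpa using hp

lemma Pos.ne_zero {m : ℕ} {x : GField m} (h : Pos x) : x ≠ 0 := by
  obtain ⟨p, q, hp, hq, rfl⟩ := h
  exact div_ne_zero (map_ne_zero' hp.1) (map_ne_zero' hq.1)

lemma Pos.one {m : ℕ} : Pos (1 : GField m) :=
  ⟨1, 1, PosP.one, PosP.one, by simp⟩

lemma Pos.gx {m : ℕ} (i : Fin m) : Pos (gx m i) :=
  ⟨MvPolynomial.X i, 1, PosP.X i, PosP.one, by simp [_root_.gx]⟩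

lemma Pos.mul {m : ℕ} {x y : GField m} (hx : Pos x) (hy : Pos y) : Pos (x * y) := by
  obtain ⟨p, q, hp, hq, rfl⟩ := hx
  obtain ⟨r, s, hr, hs, rfl⟩ := hy
  exact ⟨p * r, q * s, hp.mul hr, hq.mul hs, by rw [map_mul, map_mul]; ring⟩

lemma Pos.add {m : ℕ} {x y : GField m} (hx : Pos x) (hy : Pos y) : Pos (x + y) := by
  obtain ⟨p, q, hp, hq, rfl⟩ := hx
  obtain ⟨r, s, hr, hs, rfl⟩ := hy
  refine ⟨p * s + q * r, q * s, (hp.mul hs).add (hq.mul hr), hq.mul hs, ?_⟩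
  rw [map_add, map_mul, map_mul, map_mul]
  rw [div_add_div _ _ (map_ne_zero' hq.1) (map_ne_zero' hs.1)]

lemma Pos.inv {m : ℕ} {x : GField m} (hx : Pos x) : Pos x⁻¹ := by
  obtain ⟨p, q, hp, hq, rfl⟩ := hx
  exact ⟨q, p, hq, hp, by rw [inv_div]⟩

lemma Pos.pow {m : ℕ} {x : GField m} (hx : Pos x) (k : ℕ) : Pos (x ^ k) := by
  induction k with
  | zero => simpa using Pos.one
  | succ k ih => rw [pow_succ]; exact ih.mul hx

lemma Pos.zpow {m : ℕ} {x : GField m} (hx : Pos x) (k : ℤ) : Pos (x ^ k) := by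
  cases k with
  | ofNat k => rw [Int.ofNat_eq_coe, zpow_natCast]; exact hx.pow k
  | negSucc k => rw [zpow_negSucc]; exact (hx.pow (k+1)).inv

lemma Pos.prod {m : ℕ} {ι : Type*} (s : Finset ι) (f : ι → GField m)
    (hf : ∀ i ∈ s, Pos (f i)) : Pos (∏ i ∈ s, f i) := by
  classical
  induction s using Finset.induction_on with
  | empty => simpa using Pos.one
  | insert _ _ hx ih =>
    rw [Finset.prod_insert hx]
    exact (hf _ (Finset.mem_insert_self _ _)).mul
      (ih fun i hi => hf i (Finset.mem_insert_of_mem hi))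

lemma Pos.div {m : ℕ} {x y : GField m} (hx : Pos x) (hy : Pos y) : Pos (x / y) := by
  rw [div_eq_mul_inv]; exact hx.mul hy.inv

lemma Pos.xext {m n : ℕ} {X : Fin n → GField m} (hX : ∀ l, Pos (X l)) (i : Fin m) :
    Pos (xext X i) := by
  unfold _root_.xext
  split
  · exact hX _
  · exact Pos.gx i

/-! ### The invariant along mutation sequences -/

lemma seed_invariant {m n : ℕ} (hmn : n ≤ m) (B0 : Matrix (Fin m) (Fin n) ℤ)
    (d : Fin n → ℤ) (hd : ∀ i, 0 < d i) (hskew : SkewD hmn d B0) (w : List (Fin n)) :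
    SkewD hmn d (BmatG hmn B0 w) ∧ ∀ l, Pos (XvarG hmn B0 w l) := by
  suffices H : ∀ (w : List (Fin n)) (B : Matrix (Fin m) (Fin n) ℤ) (X : Fin n → GField m),
      SkewD hmn d B → (∀ l, Pos (X l)) →
      SkewD hmn d (w.foldl (fun p k => (matMutG hmn p.1 k, XstepG p.1 p.2 k)) (B, X)).1 ∧
      ∀ l, Pos ((w.foldl (fun p k => (matMutG hmn p.1 k, XstepG p.1 p.2 k)) (B, X)).2 l) by
    exact H w B0 _ hskew fun l => Pos.gx _
  intro w
  induction w with
  | nil => intro B X hB hX; exact ⟨hB, hX⟩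
  | cons k w ih =>
    intro B X hB hX
    simp only [List.foldl_cons]
    apply ih
    · exact hB.mut hd k
    · intro l
      unfold XstepG
      split
      · apply Pos.div
        · apply Pos.add <;>
            exact Pos.prod _ _ fun i _ => (Pos.xext hX i).pow _
        · exact hX k
      · exact hX l

lemma key_calc {G : Type*} [Field G] (a P N xk : G) (hN : N ≠ 0)
    (hPN : P + N ≠ 0) (hx : xk ≠ 0) (c : ℤ) :
    (P + N) ^ (-c) * (xk ^ (-c))⁻¹ *
      (a * (xk ^ c)⁻¹ * P ^ ((c.toNat : ℤ)) * (N ^ (((-c).toNat : ℤ)))⁻¹) =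
    a * (P * N⁻¹) ^ c.toNat * ((P + N) * N⁻¹) ^ (-c) := by
  have hm : (((-c).toNat : ℤ)) = (c.toNat : ℤ) - c := by omega
  rw [hm, zpow_sub₀ hN, ← zpow_natCast (P * N⁻¹) c.toNat, mul_zpow, mul_zpow, inv_zpow, inv_zpow]
  have h1 : xk ^ c ≠ 0 := zpow_ne_zero _ hx
  have h2 : N ^ c ≠ 0 := zpow_ne_zero _ hN
  have h3 : N ^ ((c.toNat : ℤ)) ≠ 0 := zpow_ne_zero _ hN
  have h4 : (P + N) ^ c ≠ 0 := zpow_ne_zero _ hPN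
  simp only [zpow_neg, inv_inv]
  field_simp

/-- The elements `ŷ_{j;w}` form a `Y`-pattern: mutation in
direction `k` transforms them by the `Y`-seed mutation rule. -/
theorem yhat_is_Y_pattern (m n : ℕ) (hn : 1 ≤ n) (hmn : n ≤ m)
    (B0 : Matrix (Fin m) (Fin n) ℤ)
    (d : Fin n → ℤ) (hd : ∀ i, 0 < d i)
    (hskew : ∀ i j : Fin n,
      d i * B0 (Fin.castLE hmn i) j = -(d j * B0 (Fin.castLE hmn j) i)) :
    ∀ (w : List (Fin n)) (k : Fin n),
      yhatG hmn B0 (w ++ [k]) k = (yhatG hmn B0 w k)⁻¹ ∧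
      ∀ j : Fin n, j ≠ k →
        yhatG hmn B0 (w ++ [k]) j =
          yhatG hmn B0 w j * yhatG hmn B0 w k ^ (BmatG hmn B0 w (Fin.castLE hmn k) j).toNat
            * (yhatG hmn B0 w k + 1) ^ (-(BmatG hmn B0 w (Fin.castLE hmn k) j)) := by
  intro w k
  obtain ⟨hskw, hpos⟩ := seed_invariant hmn B0 d hd hskew w
  set B := BmatG hmn B0 w with hBdef
  set X := XvarG hmn B0 w with hXdef
  have hseed : seedG hmn B0 (w ++ [k]) = (matMutG hmn B k, XstepG B X k) := by
    rw [hBdef, hXdef, BmatG, XvarG, seedG, seedG, List.foldl_append]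
    rfl
  have hB' : BmatG hmn B0 (w ++ [k]) = matMutG hmn B k := by
    rw [BmatG, hseed]
  have hX' : XvarG hmn B0 (w ++ [k]) = XstepG B X k := by
    rw [XvarG, hseed]
  have hxpos : ∀ i, Pos (xext X i) := Pos.xext hpos
  have hx : ∀ i, xext X i ≠ 0 := fun i => (hxpos i).ne_zero
  have hbkk : B (Fin.castLE hmn k) k = 0 := by
    have h1 := hskw k k
    have h2 : d k * B (Fin.castLE hmn k) k = 0 := by linarith
    rcases mul_eq_zero.mp h2 with h | h
    · exact absurd h (hd k).ne'
    · exact h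
  have hkklt : (((Fin.castLE hmn k : Fin m) : ℕ)) < n := k.isLt
  have hkkk : (⟨((Fin.castLE hmn k : Fin m) : ℕ), hkklt⟩ : Fin n) = k := by
    apply Fin.ext; simp
  have hx'_ne : ∀ i : Fin m, i ≠ Fin.castLE hmn k → xext (XstepG B X k) i = xext X i := by
    intro i hi
    unfold xext
    by_cases h : (i : ℕ) < n
    · rw [dif_pos h, dif_pos h]
      unfold XstepG
      rw [if_neg]
      intro hcon
      apply hi
      apply Fin.ext
      have : ((⟨(i:ℕ), h⟩ : Fin n) : ℕ) = (k : ℕ) := congrArg Fin.val hcon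
      simpa using this
    · rw [dif_neg h, dif_neg h]
  set Pp := ∏ i, xext X i ^ (B i k).toNat with hPpdef
  set N := ∏ i, xext X i ^ (-(B i k)).toNat with hNdef
  have hxkk : xext X (Fin.castLE hmn k) = X k := by
    unfold xext
    rw [dif_pos hkklt, hkkk]
  have hx'_kk : xext (XstepG B X k) (Fin.castLE hmn k) = (Pp + N) / xext X (Fin.castLE hmn k) := by
    rw [hxkk]
    unfold xext
    rw [dif_pos hkklt, hkkk]
    unfold XstepG
    rw [if_pos rfl, hPpdef, hNdef]
  have hPpos : Pos Pp := Pos.prod _ _ fun i _ => (hxpos i).pow _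
  have hNpos : Pos N := Pos.prod _ _ fun i _ => (hxpos i).pow _
  have hPN0 : Pp + N ≠ 0 := (hPpos.add hNpos).ne_zero
  have hN0 : N ≠ 0 := hNpos.ne_zero
  have hyk : yhatG hmn B0 w k = Pp * N⁻¹ := by
    rw [yhatG, ← hBdef, ← hXdef]
    have h1 : ∀ i : Fin m, xext X i ^ (B i k) =
        xext X i ^ (((B i k).toNat : ℤ)) / xext X i ^ ((((-(B i k)).toNat : ℤ))) := by
      intro i
      rw [← zpow_sub₀ (hx i)]
      congr 1
      omega
    rw [Finset.prod_congr rfl fun i _ => h1 i, Finset.prod_div_distrib, div_eq_mul_inv]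
    simp only [zpow_natCast]
    rfl
  constructor
  · -- first claim
    rw [yhatG, hB', hX']
    have h1 : ∀ i : Fin m, xext (XstepG B X k) i ^ (matMutG hmn B k i k) =
        (xext X i ^ (B i k))⁻¹ := by
      intro i
      have hm2 : matMutG hmn B k i k = -(B i k) := by
        simp [matMutG]
      rw [hm2, zpow_neg]
      by_cases hi : i = Fin.castLE hmn k
      · subst hi
        rw [hbkk]
        simp
      · rw [hx'_ne i hi]
    rw [Finset.prod_congr rfl fun i _ => h1 i, Finset.prod_inv_distrib]
    rw [yhatG, ← hBdef, ← hXdef]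
  · -- second claim
    intro j hj
    set c := B (Fin.castLE hmn k) j with hc
    have hmut_kk : matMutG hmn B k (Fin.castLE hmn k) j = -c := by
      rw [hc]
      simp [matMutG]
    have hmut_ne : ∀ i : Fin m, i ≠ Fin.castLE hmn k →
        matMutG hmn B k i j = B i j + ((B i k).toNat : ℤ) * (c.toNat : ℤ)
          - ((-(B i k)).toNat : ℤ) * ((-c).toNat : ℤ) := by
      intro i hi
      have hcond : ¬ (i = Fin.castLE hmn k ∨ j = k) := by
        rintro (h | h)
        · exact hi h
        · exact hj h
      simp only [matMutG, Matrix.of_apply, if_neg hcond]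
      rw [sign_mul_max_eq, Int.toNat_eq_max, Int.toNat_eq_max, Int.toNat_eq_max,
        Int.toNat_eq_max, hc]
      ring
    -- the zpow versions of Pp and N over the erased set
    have hPz : ∏ i ∈ Finset.univ.erase (Fin.castLE hmn k),
        xext X i ^ (((B i k).toNat : ℤ)) = Pp := by
      have h2 := Finset.mul_prod_erase Finset.univ
        (fun i => xext X i ^ (((B i k).toNat : ℤ))) (Finset.mem_univ (Fin.castLE hmn k))
      simp only [hbkk, neg_zero, Int.toNat_zero, Nat.cast_zero, zpow_zero, one_mul] at h2
      rw [h2, hPpdef]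
      simp only [zpow_natCast]
    have hNz : ∏ i ∈ Finset.univ.erase (Fin.castLE hmn k),
        xext X i ^ ((((-(B i k)).toNat : ℤ))) = N := by
      have h2 := Finset.mul_prod_erase Finset.univ
        (fun i => xext X i ^ ((((-(B i k)).toNat : ℤ)))) (Finset.mem_univ (Fin.castLE hmn k))
      simp only [hbkk, neg_zero, Int.toNat_zero, Nat.cast_zero, zpow_zero, one_mul] at h2
      rw [h2, hNdef]
      simp only [zpow_natCast]
    have hyj : ∏ i ∈ Finset.univ.erase (Fin.castLE hmn k), xext X i ^ (B i j) =
        yhatG hmn B0 w j * (xext X (Fin.castLE hmn k) ^ c)⁻¹ := by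
      have h2 := Finset.mul_prod_erase Finset.univ
        (fun i => xext X i ^ (B i j)) (Finset.mem_univ (Fin.castLE hmn k))
      have h3 : yhatG hmn B0 w j = ∏ i, xext X i ^ (B i j) := by
        rw [yhatG, ← hBdef, ← hXdef]
      have h4 : xext X (Fin.castLE hmn k) ^ c ≠ 0 := zpow_ne_zero _ (hx _)
      rw [h3, ← h2, ← hc, mul_comm (xext X (Fin.castLE hmn k) ^ c), mul_inv_cancel_right₀ h4]
    have hL : yhatG hmn B0 (w ++ [k]) j =
        (Pp + N) ^ (-c) * (xext X (Fin.castLE hmn k) ^ (-c))⁻¹ *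
          (yhatG hmn B0 w j * (xext X (Fin.castLE hmn k) ^ c)⁻¹ * Pp ^ ((c.toNat : ℤ))
            * (N ^ (((-c).toNat : ℤ)))⁻¹) := by
      rw [yhatG, hB', hX']
      rw [← Finset.mul_prod_erase Finset.univ _ (Finset.mem_univ (Fin.castLE hmn k))]
      have step : ∀ i ∈ Finset.univ.erase (Fin.castLE hmn k),
          xext (XstepG B X k) i ^ (matMutG hmn B k i j) =
            xext X i ^ (B i j) * (xext X i ^ (((B i k).toNat : ℤ))) ^ ((c.toNat : ℤ))
              * ((xext X i ^ ((((-(B i k)).toNat : ℤ)))) ^ (((-c).toNat : ℤ)))⁻¹ := by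
        intro i hi
        have hi' : i ≠ Fin.castLE hmn k := (Finset.mem_erase.mp hi).1
        rw [hx'_ne i hi', hmut_ne i hi', zpow_sub₀ (hx i), zpow_add₀ (hx i),
          zpow_mul, zpow_mul, div_eq_mul_inv]
      rw [Finset.prod_congr rfl step]
      rw [Finset.prod_mul_distrib, Finset.prod_mul_distrib, Finset.prod_inv_distrib,
        Finset.prod_zpow, Finset.prod_zpow, hPz, hNz, hyj]
      rw [hmut_kk, hx'_kk, div_zpow, div_eq_mul_inv]
    rw [hL, hyk]
    have hplus : Pp * N⁻¹ + 1 = (Pp + N) * N⁻¹ := by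
      field_simp
    rw [hplus]
    exact key_calc (yhatG hmn B0 w j) Pp N (xext X (Fin.castLE hmn k)) hN0 hPN0 (hx _) c

end
end

section
/- The g-vectors g_{ℓ;w} ∈ ℤⁿ of the cluster variables of the principal-coefficients pattern are uniquely determined by the initial conditions g_{ℓ;∅} = α_ℓ (ℓ = 1,…,n) together with the recurrence relations: g_{ℓ;w·k} = g_{ℓ;w} for ℓ ≠ k, and g_{k;w·k} = −g_{k;w} + ∑_{i=1}^n [b^w_{ik}]₊ · g_{i;w} − ∑_{j=1}^n [b^w_{n+j,k}]₊ · b⁰_j, where b⁰_j = ∑_{i=1}^n b⁰_{ij} α_i denotes the j-th column of B⁰. -/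
/-! Statement 7 (Fomin–Zelevinsky, "Cluster algebras IV", Proposition 6.6):
the g-vectors are uniquely determined by the initial conditions g_{ℓ;∅} = α_ℓ
and the recurrences (6.12)-(6.13). -/
open scoped BigOperators

noncomputable section

/-- The ambient field `ℚ(x₁,…,xₙ,y₁,…,yₙ)`; the `x`-variables are indexed by
`Sum.inl`, the `y`-variables by `Sum.inr`. -/
abbrev ClusterField (n : ℕ) : Type :=
  FractionRing (MvPolynomial (Fin n ⊕ Fin n) ℚ)

/-- The variable `xᵢ` in the ambient field. -/
def xv (n : ℕ) (i : Fin n) : ClusterField n :=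
  algebraMap (MvPolynomial (Fin n ⊕ Fin n) ℚ) (ClusterField n) (MvPolynomial.X (Sum.inl i))

/-- The variable `yⱼ` in the ambient field. -/
def yvF (n : ℕ) (j : Fin n) : ClusterField n :=
  algebraMap (MvPolynomial (Fin n ⊕ Fin n) ℚ) (ClusterField n) (MvPolynomial.X (Sum.inr j))

/-- The initial `2n × n` extended exchange matrix: top part `B⁰`, bottom part the identity. -/
def initB {n : ℕ} (B0 : Matrix (Fin n) (Fin n) ℤ) :
    Matrix (Fin n ⊕ Fin n) (Fin n) ℤ :=
  Matrix.of fun i j =>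
    match i with
    | Sum.inl i' => B0 i' j
    | Sum.inr i' => if i' = j then 1 else 0

/-- Mutation of the `2n × n` extended exchange matrix in direction `k`. -/
def matMut {n : ℕ} (B : Matrix (Fin n ⊕ Fin n) (Fin n) ℤ) (k : Fin n) :
    Matrix (Fin n ⊕ Fin n) (Fin n) ℤ :=
  Matrix.of fun i j =>
    if i = Sum.inl k ∨ j = k then -B i j
    else B i j + Int.sign (B i k) * max (B i k * B (Sum.inl k) j) 0

/-- One exchange (mutation) step for the cluster variables, with principal coefficients. -/
def Xstep {n : ℕ} (B : Matrix (Fin n ⊕ Fin n) (Fin n) ℤ)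
    (X : Fin n → ClusterField n) (k : Fin n) : Fin n → ClusterField n :=
  fun l =>
    if l = k then
      ((∏ j, yvF n j ^ (B (Sum.inr j) k).toNat) * (∏ i, X i ^ (B (Sum.inl i) k).toNat)
          + (∏ j, yvF n j ^ (-(B (Sum.inr j) k)).toNat) *
              (∏ i, X i ^ (-(B (Sum.inl i) k)).toNat)) / X k
    else X l

/-- The labeled seed (extended matrix together with cluster) attached to the
mutation sequence `w`, for the pattern with principal coefficients. -/
def seed {n : ℕ} (B0 : Matrix (Fin n) (Fin n) ℤ) (w : List (Fin n)) :
    Matrix (Fin n ⊕ Fin n) (Fin n) ℤ × (Fin n → ClusterField n) :=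
  w.foldl (fun p k => (matMut p.1 k, Xstep p.1 p.2 k)) (initB B0, fun l => xv n l)

/-- The extended exchange matrix `B̃_w`. -/
def Bmat {n : ℕ} (B0 : Matrix (Fin n) (Fin n) ℤ) (w : List (Fin n)) :
    Matrix (Fin n ⊕ Fin n) (Fin n) ℤ := (seed B0 w).1

/-- The cluster variable `X_{ℓ;w}`. -/
def Xvar {n : ℕ} (B0 : Matrix (Fin n) (Fin n) ℤ) (w : List (Fin n)) :
    Fin n → ClusterField n := (seed B0 w).2

/-- The field `ℚ(y₁,…,yₙ)`. -/
abbrev YField (n : ℕ) : Type := FractionRing (MvPolynomial (Fin n) ℚ)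

/-- The variable `yⱼ` in `ℚ(y₁,…,yₙ)`. -/
def yv (n : ℕ) (j : Fin n) : YField n :=
  algebraMap (MvPolynomial (Fin n) ℚ) (YField n) (MvPolynomial.X j)

/-- The exchange step at `x₁ = ⋯ = xₙ = 1`: the recursion for the `F`-polynomials. -/
def Fstep {n : ℕ} (B : Matrix (Fin n ⊕ Fin n) (Fin n) ℤ)
    (F : Fin n → YField n) (k : Fin n) : Fin n → YField n :=
  fun l =>
    if l = k then
      ((∏ j, yv n j ^ (B (Sum.inr j) k).toNat) * (∏ i, F i ^ (B (Sum.inl i) k).toNat)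
          + (∏ j, yv n j ^ (-(B (Sum.inr j) k)).toNat) *
              (∏ i, F i ^ (-(B (Sum.inl i) k)).toNat)) / F k
    else F l

/-- The seed of the pattern specialized at `x₁ = ⋯ = xₙ = 1`. -/
def Fseed {n : ℕ} (B0 : Matrix (Fin n) (Fin n) ℤ) (w : List (Fin n)) :
    Matrix (Fin n ⊕ Fin n) (Fin n) ℤ × (Fin n → YField n) :=
  w.foldl (fun p k => (matMut p.1 k, Fstep p.1 p.2 k)) (initB B0, fun _ => 1)

/-- The `F`-polynomial `F_{ℓ;w}`, i.e. the image of `X_{ℓ;w}` under the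
specialization `x₁ = ⋯ = xₙ = 1`. -/
def Fpoly {n : ℕ} (B0 : Matrix (Fin n) (Fin n) ℤ) (w : List (Fin n)) :
    Fin n → YField n := (Fseed B0 w).2


/-- The element `ŷ_j = y_j ∏ᵢ x_i^{b⁰_{ij}}` of the ambient field. -/
def yhat {n : ℕ} (B0 : Matrix (Fin n) (Fin n) ℤ) (j : Fin n) : ClusterField n :=
  yvF n j * ∏ i, xv n i ^ (B0 i j)

/-- One step of the recursion computing the evaluations `F_{ℓ;w}(ŷ₁,…,ŷₙ)`:
the `F`-polynomial recursion with `yⱼ` replaced by `ŷⱼ`. -/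
def FhatStep {n : ℕ} (B0 : Matrix (Fin n) (Fin n) ℤ)
    (B : Matrix (Fin n ⊕ Fin n) (Fin n) ℤ)
    (F : Fin n → ClusterField n) (k : Fin n) : Fin n → ClusterField n :=
  fun l =>
    if l = k then
      ((∏ j, yhat B0 j ^ (B (Sum.inr j) k).toNat) * (∏ i, F i ^ (B (Sum.inl i) k).toNat)
          + (∏ j, yhat B0 j ^ (-(B (Sum.inr j) k)).toNat) *
              (∏ i, F i ^ (-(B (Sum.inl i) k)).toNat)) / F k
    else F l

/-- The evaluation `F_{ℓ;w}(ŷ₁,…,ŷₙ) ∈ ℚ(x₁,…,xₙ,y₁,…,yₙ)` of the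
`F`-polynomial at `ŷ₁,…,ŷₙ`. -/
def Fhat {n : ℕ} (B0 : Matrix (Fin n) (Fin n) ℤ) (w : List (Fin n)) :
    Fin n → ClusterField n :=
  (w.foldl (fun p k => (matMut p.1 k, FhatStep B0 p.1 p.2 k))
    (initB B0, fun _ => 1)).2

/-- `g` is the family of `g`-vectors of the principal-coefficients pattern:
`g w ℓ` is the (unique) vector with `X_{ℓ;w} = x^{g w ℓ} · F_{ℓ;w}(ŷ)`. -/
def IsGVectorFamily {n : ℕ} (B0 : Matrix (Fin n) (Fin n) ℤ)
    (g : List (Fin n) → Fin n → Fin n → ℤ) : Prop :=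
  ∀ (w : List (Fin n)) (l : Fin n),
    Xvar B0 w l = (∏ i, xv n i ^ g w l i) * Fhat B0 w l

/-- The initial conditions and recurrence relations for the `g`-vectors:
`g_{ℓ;∅} = α_ℓ`, `g_{ℓ;w·k} = g_{ℓ;w}` for `ℓ ≠ k`, and
`g_{k;w·k} = −g_{k;w} + ∑ᵢ [b^w_{ik}]₊ g_{i;w} − ∑ⱼ [b^w_{n+j,k}]₊ b⁰ⱼ`. -/
def SatisfiesGRecurrence {n : ℕ} (B0 : Matrix (Fin n) (Fin n) ℤ)
    (g : List (Fin n) → Fin n → Fin n → ℤ) : Prop :=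
  (∀ l i : Fin n, g [] l i = if i = l then 1 else 0) ∧
  (∀ (w : List (Fin n)) (k l : Fin n), l ≠ k → g (w ++ [k]) l = g w l) ∧
  (∀ (w : List (Fin n)) (k i : Fin n),
    g (w ++ [k]) k i =
      -g w k i + (∑ i', max (Bmat B0 w (Sum.inl i') k) 0 * g w i' i)
        - ∑ j, max (Bmat B0 w (Sum.inr j) k) 0 * B0 i j)

-- integer sign/max lemma
theorem sgnmax (a c : ℤ) : Int.sign a * max (a * c) 0 = max a 0 * c + a * max (-c) 0 := by
  rcases lt_trichotomy a 0 with ha | ha | ha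
  · rcases le_or_gt c 0 with hc | hc
    · rw [Int.sign_eq_neg_one_of_neg ha, max_eq_left (by nlinarith), max_eq_right ha.le,
        max_eq_left (by linarith)]
      ring
    · rw [Int.sign_eq_neg_one_of_neg ha, max_eq_right (by nlinarith), max_eq_right ha.le,
        max_eq_right (by linarith)]
      ring
  · simp [ha]
  · rcases le_or_gt c 0 with hc | hc
    · rw [Int.sign_eq_one_of_pos ha, max_eq_right (by nlinarith), max_eq_left ha.le,
        max_eq_left (by linarith)]
      ring
    · rw [Int.sign_eq_one_of_pos ha, max_eq_left (by nlinarith), max_eq_left ha.le,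
        max_eq_right (by linarith)]
      ring

theorem maxsub (a : ℤ) : max a 0 - max (-a) 0 = a := by
  rcases le_or_gt a 0 with h | h
  · rw [max_eq_right h, max_eq_left (by linarith)]; ring
  · rw [max_eq_left h.le, max_eq_right (by linarith)]; ring

theorem mulmax (a b : ℤ) (ha : 0 ≤ a) : a * max b 0 = max (a * b) 0 := by
  rcases le_or_gt b 0 with h | h
  · rw [max_eq_right h, max_eq_right (by nlinarith)]; ring
  · rw [max_eq_left h.le, max_eq_left (by nlinarith)]

variable {n : ℕ}

def SkewTop (d : Fin n → ℤ) (B : Matrix (Fin n ⊕ Fin n) (Fin n) ℤ) : Prop :=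
  ∀ i j, d i * B (Sum.inl i) j = -(d j * B (Sum.inl j) i)

theorem skew_diag {d : Fin n → ℤ} {B : Matrix (Fin n ⊕ Fin n) (Fin n) ℤ}
    (hd : ∀ i, 0 < d i) (h : SkewTop d B) (k : Fin n) : B (Sum.inl k) k = 0 := by
  have := h k k
  have hk := hd k
  nlinarith [this, hk]
theorem cross_term (di dj dk p q r s : ℤ) (hdi : 0 ≤ di) (hdj : 0 ≤ dj) (hdk : 0 ≤ dk)
    (h1 : di * p = -(dk * q)) (h2 : dj * r = -(dk * s)) :
    di * (max p 0 * s + p * max (-s) 0) = -(dj * (max r 0 * q + r * max (-q) 0)) := by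
  have A : di * max p 0 = dk * max (-q) 0 := by
    rw [mulmax _ _ hdi, mulmax _ _ hdk, h1]; ring_nf
  have B : dj * max r 0 = dk * max (-s) 0 := by
    rw [mulmax _ _ hdj, mulmax _ _ hdk, h2]; ring_nf
  linear_combination s * A + max (-s) 0 * h1 + q * B + max (-q) 0 * h2

theorem skew_matMut {d : Fin n → ℤ} {B : Matrix (Fin n ⊕ Fin n) (Fin n) ℤ}
    (hd : ∀ i, 0 < d i) (h : SkewTop d B) (k : Fin n) : SkewTop d (matMut B k) := by
  intro i j
  by_cases hik : i = k
  · by_cases hjk : j = k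
    · have e1 : matMut B k (Sum.inl i) j = -B (Sum.inl i) j := by
        simp [matMut, hik]
      have e2 : matMut B k (Sum.inl j) i = -B (Sum.inl j) i := by
        simp [matMut, hjk]
      rw [e1, e2]; have := h i j; linarith
    · have e1 : matMut B k (Sum.inl i) j = -B (Sum.inl i) j := by
        simp [matMut, hik]
      have e2 : matMut B k (Sum.inl j) i = -B (Sum.inl j) i := by
        simp [matMut, hik]
      rw [e1, e2]; have := h i j; linarith
  · by_cases hjk : j = k
    · have e1 : matMut B k (Sum.inl i) j = -B (Sum.inl i) j := by
        simp [matMut, hjk]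
      have e2 : matMut B k (Sum.inl j) i = -B (Sum.inl j) i := by
        simp [matMut, hjk]
      rw [e1, e2]; have := h i j; linarith
    · have e1 : matMut B k (Sum.inl i) j = B (Sum.inl i) j
          + Int.sign (B (Sum.inl i) k) * max (B (Sum.inl i) k * B (Sum.inl k) j) 0 := by
        simp only [matMut, Matrix.of_apply]
        rw [if_neg (by simp [hik, hjk])]
      have e2 : matMut B k (Sum.inl j) i = B (Sum.inl j) i
          + Int.sign (B (Sum.inl j) k) * max (B (Sum.inl j) k * B (Sum.inl k) i) 0 := by
        simp only [matMut, Matrix.of_apply]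
        rw [if_neg (by simp [hjk, hik])]
      rw [e1, e2, sgnmax, sgnmax, mul_add, mul_add]
      have hc := cross_term (d i) (d j) (d k) (B (Sum.inl i) k) (B (Sum.inl k) i)
        (B (Sum.inl j) k) (B (Sum.inl k) j) (hd i).le (hd j).le (hd k).le (h i k) (h j k)
      have := h i j
      linarith

/-! ### The constructed g-vector family -/

def gMut (B0 : Matrix (Fin n) (Fin n) ℤ) (B : Matrix (Fin n ⊕ Fin n) (Fin n) ℤ)
    (g : Fin n → Fin n → ℤ) (k : Fin n) : Fin n → Fin n → ℤ :=
  fun l i => if l = k then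
    -g k i + (∑ i', max (B (Sum.inl i') k) 0 * g i' i) - ∑ j, max (B (Sum.inr j) k) 0 * B0 i j
  else g l i

def gseed (B0 : Matrix (Fin n) (Fin n) ℤ) (w : List (Fin n)) :
    Matrix (Fin n ⊕ Fin n) (Fin n) ℤ × (Fin n → Fin n → ℤ) :=
  w.foldl (fun p k => (matMut p.1 k, gMut B0 p.1 p.2 k))
    (initB B0, fun l i => if i = l then 1 else 0)

def gvec (B0 : Matrix (Fin n) (Fin n) ℤ) (w : List (Fin n)) : Fin n → Fin n → ℤ :=
  (gseed B0 w).2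

theorem foldl_pair_fst {γ : Type*}
    (F : Matrix (Fin n ⊕ Fin n) (Fin n) ℤ → γ → Fin n → γ) :
    ∀ (w : List (Fin n)) (A : Matrix (Fin n ⊕ Fin n) (Fin n) ℤ) (c : γ),
      (w.foldl (fun p k => (matMut p.1 k, F p.1 p.2 k)) (A, c)).1 = w.foldl matMut A := by
  intro w
  induction w with
  | nil => intro A c; rfl
  | cons k w ih => intro A c; exact ih _ _

theorem Bmat_eq_foldl (B0 : Matrix (Fin n) (Fin n) ℤ) (w : List (Fin n)) :
    Bmat B0 w = w.foldl matMut (initB B0) :=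
  foldl_pair_fst _ w _ _

theorem gseed_fst (B0 : Matrix (Fin n) (Fin n) ℤ) (w : List (Fin n)) :
    (gseed B0 w).1 = Bmat B0 w := by
  rw [gseed, foldl_pair_fst, Bmat_eq_foldl]

theorem Fhatseed_fst (B0 : Matrix (Fin n) (Fin n) ℤ) (w : List (Fin n)) :
    (w.foldl (fun p k => (matMut p.1 k, FhatStep B0 p.1 p.2 k))
      (initB B0, fun _ => (1 : ClusterField n))).1 = Bmat B0 w := by
  rw [foldl_pair_fst, Bmat_eq_foldl]

theorem Bmat_append (B0 : Matrix (Fin n) (Fin n) ℤ) (w : List (Fin n)) (k : Fin n) :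
    Bmat B0 (w ++ [k]) = matMut (Bmat B0 w) k := by
  rw [Bmat_eq_foldl, Bmat_eq_foldl, List.foldl_append]; rfl

theorem Xvar_append (B0 : Matrix (Fin n) (Fin n) ℤ) (w : List (Fin n)) (k : Fin n) :
    Xvar B0 (w ++ [k]) = Xstep (Bmat B0 w) (Xvar B0 w) k := by
  unfold Xvar Bmat seed
  rw [List.foldl_append]; rfl

theorem Fhat_append (B0 : Matrix (Fin n) (Fin n) ℤ) (w : List (Fin n)) (k : Fin n) :
    Fhat B0 (w ++ [k]) = FhatStep B0 (Bmat B0 w) (Fhat B0 w) k := by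
  unfold Fhat
  rw [List.foldl_append, ← Fhatseed_fst B0 w]; rfl

theorem gvec_append (B0 : Matrix (Fin n) (Fin n) ℤ) (w : List (Fin n)) (k : Fin n) :
    gvec B0 (w ++ [k]) = gMut B0 (Bmat B0 w) (gvec B0 w) k := by
  unfold gvec gseed
  rw [List.foldl_append, ← gseed_fst B0 w]; rfl

theorem gvec_satisfies (B0 : Matrix (Fin n) (Fin n) ℤ) :
    SatisfiesGRecurrence B0 (gvec B0) := by
  refine ⟨fun l i => rfl, ?_, ?_⟩
  · intro w k l hlk
    funext i
    rw [gvec_append]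
    simp [gMut, hlk]
  · intro w k i
    rw [gvec_append]
    simp [gMut]

theorem grec_unique (B0 : Matrix (Fin n) (Fin n) ℤ)
    (g₁ g₂ : List (Fin n) → Fin n → Fin n → ℤ)
    (h₁ : SatisfiesGRecurrence B0 g₁) (h₂ : SatisfiesGRecurrence B0 g₂) : g₁ = g₂ := by
  funext w
  induction w using List.reverseRecOn with
  | nil => funext l i; rw [h₁.1, h₂.1]
  | append_singleton w k ih =>
    funext l i
    by_cases hlk : l = k
    · subst hlk
      rw [h₁.2.2, h₂.2.2, ih]
    · rw [h₁.2.1 w k l hlk, h₂.2.1 w k l hlk, ih]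

/-! ### Skew-symmetrizability along the pattern -/

theorem skew_Bmat {d : Fin n → ℤ} (hd : ∀ i, 0 < d i) {B0 : Matrix (Fin n) (Fin n) ℤ}
    (h : ∀ i j, d i * B0 i j = -(d j * B0 j i)) (w : List (Fin n)) :
    SkewTop d (Bmat B0 w) := by
  rw [Bmat_eq_foldl]
  have init : SkewTop d (initB B0) := fun i j => h i j
  clear h
  induction w using List.reverseRecOn with
  | nil => exact init
  | append_singleton w k ih =>
    rw [List.foldl_append]
    exact skew_matMut hd ih k

/-! ### The key identity `∑ᵢ bᵢₖ gᵢ = ∑ⱼ cⱼₖ b⁰ⱼ` -/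

theorem keyIdentity {d : Fin n → ℤ} (hd : ∀ i, 0 < d i) {B0 : Matrix (Fin n) (Fin n) ℤ}
    (hsk : ∀ i j, d i * B0 i j = -(d j * B0 j i)) (w : List (Fin n)) (m i : Fin n) :
    (∑ i', Bmat B0 w (Sum.inl i') m * gvec B0 w i' i)
      = ∑ j, Bmat B0 w (Sum.inr j) m * B0 i j := by
  induction w using List.reverseRecOn generalizing m with
  | nil =>
    have hB : ∀ i' , Bmat B0 [] (Sum.inl i') m = B0 i' m := fun _ => rfl
    have hC : ∀ j, Bmat B0 [] (Sum.inr j) m = if j = m then 1 else 0 := fun _ => rfl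
    have hg : ∀ i' , gvec B0 [] i' i = if i = i' then 1 else 0 := fun _ => rfl
    simp only [hB, hC, hg, mul_ite, ite_mul, mul_one, mul_zero, one_mul, zero_mul]
    simp [Finset.sum_ite_eq, Finset.sum_ite_eq']
  | append_singleton w k ih =>
    have hskw := skew_Bmat hd hsk w
    have hdiag : Bmat B0 w (Sum.inl k) k = 0 := skew_diag hd hskw k
    have hBa : ∀ r c, Bmat B0 (w ++ [k]) r c = matMut (Bmat B0 w) k r c := by
      rw [Bmat_append]; intro r c; rfl
    rcases eq_or_ne m k with hm | hm
    · rw [hm]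
      have hterm : ∀ i', Bmat B0 (w ++ [k]) (Sum.inl i') k * gvec B0 (w ++ [k]) i' i
          = -(Bmat B0 w (Sum.inl i') k * gvec B0 w i' i) := by
        intro i'
        rw [hBa]
        simp only [matMut, Matrix.of_apply]
        rw [if_pos (Or.inr trivial)]
        rcases eq_or_ne i' k with hik | hik
        · rw [hik, hdiag]; ring
        · rw [gvec_append]
          simp only [gMut, if_neg hik]
          ring
      have hterm2 : ∀ j, Bmat B0 (w ++ [k]) (Sum.inr j) k * B0 i j
          = -(Bmat B0 w (Sum.inr j) k * B0 i j) := by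
        intro j
        rw [hBa]
        simp only [matMut, Matrix.of_apply]
        rw [if_pos (Or.inr trivial)]
        ring
      rw [Finset.sum_congr rfl fun i' _ => hterm i',
        Finset.sum_congr rfl fun j _ => hterm2 j,
        Finset.sum_neg_distrib, Finset.sum_neg_distrib, ih k]
    · -- m ≠ k
      have hgk : gvec B0 (w ++ [k]) k i = -gvec B0 w k i
          + (∑ i', max (Bmat B0 w (Sum.inl i') k) 0 * gvec B0 w i' i)
          - ∑ j, max (Bmat B0 w (Sum.inr j) k) 0 * B0 i j := by
        rw [gvec_append]; simp [gMut]
      have hterm : ∀ i', Bmat B0 (w ++ [k]) (Sum.inl i') m * gvec B0 (w ++ [k]) i' i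
          = Bmat B0 w (Sum.inl i') m * gvec B0 w i' i
            + (max (Bmat B0 w (Sum.inl i') k) 0 * gvec B0 w i' i) * Bmat B0 w (Sum.inl k) m
            + (Bmat B0 w (Sum.inl i') k * gvec B0 w i' i) * max (-(Bmat B0 w (Sum.inl k) m)) 0
            + (if i' = k then
                -(Bmat B0 w (Sum.inl k) m) *
                  ((∑ i'', max (Bmat B0 w (Sum.inl i'') k) 0 * gvec B0 w i'' i)
                    - ∑ j, max (Bmat B0 w (Sum.inr j) k) 0 * B0 i j)
              else 0) := by
        intro i'
        rcases eq_or_ne i' k with hik | hik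
        · rw [hik, hBa, hgk, if_pos rfl]
          simp only [matMut, Matrix.of_apply]
          rw [if_pos (Or.inl trivial), hdiag]
          simp only [max_self]
          ring
        · rw [hBa, gvec_append, if_neg hik]
          simp only [matMut, Matrix.of_apply, gMut, if_neg hik]
          rw [if_neg (by simp [hik, hm] : ¬(Sum.inl i' = Sum.inl k ∨ m = k)), sgnmax]
          ring
      have hterm2 : ∀ j, Bmat B0 (w ++ [k]) (Sum.inr j) m * B0 i j
          = Bmat B0 w (Sum.inr j) m * B0 i j
            + (max (Bmat B0 w (Sum.inr j) k) 0 * B0 i j) * Bmat B0 w (Sum.inl k) m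
            + (Bmat B0 w (Sum.inr j) k * B0 i j) * max (-(Bmat B0 w (Sum.inl k) m)) 0 := by
        intro j
        rw [hBa]
        simp only [matMut, Matrix.of_apply]
        rw [if_neg (by simp [hm] : ¬(Sum.inr j = Sum.inl k ∨ m = k)), sgnmax]
        ring
      rw [Finset.sum_congr rfl fun i' _ => hterm i',
        Finset.sum_congr rfl fun j _ => hterm2 j]
      simp only [Finset.sum_add_distrib, ← Finset.sum_mul, Finset.sum_ite_eq',
        Finset.mem_univ, if_true]
      rw [ih m, ih k]
      ring

/-! ### Laurent monomials in the x-variables -/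

theorem xv_ne_zero (i : Fin n) : xv n i ≠ 0 := by
  unfold xv
  rw [map_ne_zero_iff _ (IsFractionRing.injective (MvPolynomial (Fin n ⊕ Fin n) ℚ) (ClusterField n))]
  exact MvPolynomial.X_ne_zero (R := ℚ) (Sum.inl i)

def xmon (n : ℕ) (v : Fin n → ℤ) : ClusterField n := ∏ i, xv n i ^ v i

theorem xmon_ne_zero (v : Fin n → ℤ) : xmon n v ≠ 0 :=
  Finset.prod_ne_zero_iff.2 fun i _ => zpow_ne_zero _ (xv_ne_zero i)

theorem xmon_add (v w : Fin n → ℤ) :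
    xmon n (fun r => v r + w r) = xmon n v * xmon n w := by
  rw [xmon, xmon, xmon, ← Finset.prod_mul_distrib]
  exact Finset.prod_congr rfl fun r _ => zpow_add₀ (xv_ne_zero r) _ _

theorem xmon_pow (v : Fin n → ℤ) (p : ℕ) :
    xmon n v ^ p = xmon n (fun r => (p : ℤ) * v r) := by
  rw [xmon, xmon, ← Finset.prod_pow]
  refine Finset.prod_congr rfl fun r _ => ?_
  rw [← zpow_natCast (xv n r ^ v r) p, ← zpow_mul, mul_comm]

theorem xmon_prod (V : Fin n → Fin n → ℤ) :
    (∏ i, xmon n (V i)) = xmon n (fun r => ∑ i, V i r) := by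
  simp only [xmon]
  rw [Finset.prod_comm]
  refine Finset.prod_congr rfl fun r _ => ?_
  induction (Finset.univ : Finset (Fin n)) using Finset.induction with
  | empty => simp
  | @insert _ _ h ih => rw [Finset.prod_insert h, Finset.sum_insert h, ih,
      zpow_add₀ (xv_ne_zero r)]

theorem prod_pow_xmon (G : Fin n → Fin n → ℤ) (F : Fin n → ClusterField n)
    (p : Fin n → ℕ) :
    (∏ i, (xmon n (G i) * F i) ^ p i)
      = xmon n (fun r => ∑ i, (p i : ℤ) * G i r) * ∏ i, F i ^ p i := by
  have : ∀ i, (xmon n (G i) * F i) ^ p i = xmon n (fun r => (p i : ℤ) * G i r) * F i ^ p i := by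
    intro i; rw [mul_pow, xmon_pow]
  rw [Finset.prod_congr rfl fun i _ => this i, Finset.prod_mul_distrib, xmon_prod]

theorem yhat_eq (B0 : Matrix (Fin n) (Fin n) ℤ) (j : Fin n) :
    yhat B0 j = xmon n (fun r => B0 r j) * yvF n j := by
  rw [yhat, xmon, mul_comm]

theorem prod_yhat_pow (B0 : Matrix (Fin n) (Fin n) ℤ) (t : Fin n → ℕ) :
    (∏ j, yhat B0 j ^ t j)
      = xmon n (fun r => ∑ j, (t j : ℤ) * B0 r j) * ∏ j, yvF n j ^ t j := by
  have h := prod_pow_xmon (fun j r => B0 r j) (yvF n) t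
  rw [← h]
  exact Finset.prod_congr rfl fun j _ => by rw [yhat_eq]

theorem xmon_add3 (u v w : Fin n → ℤ) :
    xmon n (fun r => u r + v r + w r) = xmon n u * xmon n v * xmon n w := by
  simp only [xmon, ← Finset.prod_mul_distrib]
  exact Finset.prod_congr rfl fun r _ => by
    rw [zpow_add₀ (xv_ne_zero r), zpow_add₀ (xv_ne_zero r)]

theorem assemble {K : Type*} [Field K] (A Gk Tp Tq Yp Ym Pp Pq Fk : K) (h : Gk ≠ 0) :
    (Yp * ((A * Gk * Tp) * Pp) + Ym * ((A * Gk * Tq) * Pq)) / (Gk * Fk)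
      = A * ((Tp * Yp * Pp + Tq * Ym * Pq) / Fk) := by
  have hnum : Yp * ((A * Gk * Tp) * Pp) + Ym * ((A * Gk * Tq) * Pq)
      = Gk * (A * (Tp * Yp * Pp + Tq * Ym * Pq)) := by ring
  rw [hnum, mul_div_mul_left _ _ h, mul_div_assoc]

theorem main_step (B0 : Matrix (Fin n) (Fin n) ℤ) (b : Matrix (Fin n ⊕ Fin n) (Fin n) ℤ)
    (G : Fin n → Fin n → ℤ) (X F : Fin n → ClusterField n) (k : Fin n)
    (hX : ∀ i, X i = xmon n (G i) * F i)
    (hkey : ∀ r, (∑ i, b (Sum.inl i) k * G i r) = ∑ j, b (Sum.inr j) k * B0 r j) :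
    Xstep b X k k = xmon n (gMut B0 b G k k) * FhatStep B0 b F k k := by
  simp only [Xstep, FhatStep, if_pos rfl]
  rw [Finset.prod_congr rfl fun i (_ : i ∈ Finset.univ) =>
      (by rw [hX i] : X i ^ (b (Sum.inl i) k).toNat = (xmon n (G i) * F i) ^ (b (Sum.inl i) k).toNat),
    Finset.prod_congr rfl fun i (_ : i ∈ Finset.univ) =>
      (by rw [hX i] : X i ^ (-(b (Sum.inl i) k)).toNat = (xmon n (G i) * F i) ^ (-(b (Sum.inl i) k)).toNat),
    prod_pow_xmon, prod_pow_xmon, prod_yhat_pow, prod_yhat_pow, hX k]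
  have e1 : (fun r => ∑ i, (((b (Sum.inl i) k).toNat : ℤ)) * G i r)
      = fun r => gMut B0 b G k k r + G k r + (∑ j, ((b (Sum.inr j) k).toNat : ℤ) * B0 r j) := by
    funext r
    simp only [Int.toNat_eq_max, gMut, if_pos rfl, if_true]
    ring
  have e2 : (fun r => ∑ i, (((-(b (Sum.inl i) k)).toNat : ℤ)) * G i r)
      = fun r => gMut B0 b G k k r + G k r + (∑ j, ((-(b (Sum.inr j) k)).toNat : ℤ) * B0 r j) := by
    funext r
    simp only [Int.toNat_eq_max, gMut, if_pos rfl, if_true]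
    have h1 : (∑ i, max (b (Sum.inl i) k) 0 * G i r) - (∑ i, max (-(b (Sum.inl i) k)) 0 * G i r)
        = ∑ j, b (Sum.inr j) k * B0 r j := by
      rw [← Finset.sum_sub_distrib, ← hkey r]
      exact Finset.sum_congr rfl fun i _ => by rw [← sub_mul, maxsub]
    have h2 : (∑ j, max (b (Sum.inr j) k) 0 * B0 r j) - (∑ j, max (-(b (Sum.inr j) k)) 0 * B0 r j)
        = ∑ j, b (Sum.inr j) k * B0 r j := by
      rw [← Finset.sum_sub_distrib]
      exact Finset.sum_congr rfl fun j _ => by rw [← sub_mul, maxsub]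
    linarith [h1, h2]
  rw [e1, e2,
    xmon_add3 (gMut B0 b G k k) (G k) (fun r => ∑ j, ((b (Sum.inr j) k).toNat : ℤ) * B0 r j),
    xmon_add3 (gMut B0 b G k k) (G k) (fun r => ∑ j, ((-(b (Sum.inr j) k)).toNat : ℤ) * B0 r j)]
  simp only [if_true]
  exact assemble _ _ _ _ _ _ _ _ _ (xmon_ne_zero _)

theorem gvec_isFamily {d : Fin n → ℤ} (hd : ∀ i, 0 < d i) {B0 : Matrix (Fin n) (Fin n) ℤ}
    (hsk : ∀ i j, d i * B0 i j = -(d j * B0 j i)) :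
    IsGVectorFamily B0 (gvec B0) := by
  intro w
  induction w using List.reverseRecOn with
  | nil =>
    intro l
    show xv n l = (∏ i, xv n i ^ gvec B0 [] l i) * 1
    rw [mul_one]
    have h1 : ∀ i, xv n i ^ gvec B0 [] l i = if i = l then xv n i else 1 := by
      intro i
      show xv n i ^ (if i = l then (1 : ℤ) else 0) = _
      split <;> simp
    rw [Finset.prod_congr rfl fun i _ => h1 i,
      Finset.prod_ite_eq' Finset.univ l (fun i => xv n i)]
    simp
  | append_singleton w k ih =>
    intro l
    rw [Xvar_append, Fhat_append, gvec_append]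
    rcases eq_or_ne l k with hlk | hlk
    · rw [hlk]
      exact main_step B0 (Bmat B0 w) (gvec B0 w) (Xvar B0 w) (Fhat B0 w) k
        (fun i => ih i) (fun r => keyIdentity hd hsk w k r)
    · show Xstep _ _ k l = _
      simp only [Xstep, FhatStep, gMut, if_neg hlk]
      exact ih l

/-! ### Positive elements of the fraction field -/

def PosElem (f : ClusterField n) : Prop :=
  ∃ P Q : MvPolynomial (Fin n ⊕ Fin n) ℚ, P ≠ 0 ∧ Q ≠ 0 ∧
    (∀ u, 0 ≤ P.coeff u) ∧ (∀ u, 0 ≤ Q.coeff u) ∧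
    f = algebraMap _ (ClusterField n) P / algebraMap _ (ClusterField n) Q

theorem algebraMap_ne_zero {P : MvPolynomial (Fin n ⊕ Fin n) ℚ} (hP : P ≠ 0) :
    algebraMap _ (ClusterField n) P ≠ 0 := by
  rw [map_ne_zero_iff _ (IsFractionRing.injective (MvPolynomial (Fin n ⊕ Fin n) ℚ) (ClusterField n))]
  exact hP

theorem posElem_ne_zero {f : ClusterField n} (h : PosElem f) : f ≠ 0 := by
  obtain ⟨P, Q, hP, hQ, _, _, rfl⟩ := h
  exact div_ne_zero (algebraMap_ne_zero hP) (algebraMap_ne_zero hQ)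

theorem coeff_mul_nonneg {P Q : MvPolynomial (Fin n ⊕ Fin n) ℚ}
    (hP : ∀ u, 0 ≤ P.coeff u) (hQ : ∀ u, 0 ≤ Q.coeff u) (u) : 0 ≤ (P * Q).coeff u := by
  rw [MvPolynomial.coeff_mul]
  exact Finset.sum_nonneg fun x _ => mul_nonneg (hP _) (hQ _)

theorem add_pos_ne_zero {P Q : MvPolynomial (Fin n ⊕ Fin n) ℚ} (hP : P ≠ 0)
    (hPc : ∀ u, 0 ≤ P.coeff u) (hQc : ∀ u, 0 ≤ Q.coeff u) : P + Q ≠ 0 := by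
  obtain ⟨u, hu⟩ := MvPolynomial.ne_zero_iff.1 hP
  intro hc
  have h2 : (P + Q).coeff u = 0 := by rw [hc]; simp
  rw [MvPolynomial.coeff_add] at h2
  have := hPc u
  have := hQc u
  have : P.coeff u = 0 := by linarith
  exact hu this

theorem posElem_one : PosElem (1 : ClusterField n) := by
  refine ⟨1, 1, one_ne_zero, one_ne_zero, ?_, ?_, by simp⟩ <;>
  · intro u
    rw [MvPolynomial.coeff_one]
    split <;> norm_num

theorem posElem_var (s : Fin n ⊕ Fin n) :
    PosElem (algebraMap (MvPolynomial (Fin n ⊕ Fin n) ℚ) (ClusterField n) (MvPolynomial.X s)) := by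
  refine ⟨MvPolynomial.X s, 1, MvPolynomial.X_ne_zero s, one_ne_zero, ?_, ?_, by simp⟩
  · intro u
    rw [MvPolynomial.coeff_X']
    split <;> norm_num
  · intro u
    rw [MvPolynomial.coeff_one]
    split <;> norm_num

theorem posElem_mul {f g : ClusterField n} (hf : PosElem f) (hg : PosElem g) :
    PosElem (f * g) := by
  obtain ⟨P1, Q1, h1, h2, h3, h4, rfl⟩ := hf
  obtain ⟨P2, Q2, h5, h6, h7, h8, rfl⟩ := hg
  refine ⟨P1 * P2, Q1 * Q2, mul_ne_zero h1 h5, mul_ne_zero h2 h6,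
    coeff_mul_nonneg h3 h7, coeff_mul_nonneg h4 h8, ?_⟩
  rw [map_mul, map_mul]
  rw [div_mul_div_comm]

theorem posElem_add {f g : ClusterField n} (hf : PosElem f) (hg : PosElem g) :
    PosElem (f + g) := by
  obtain ⟨P1, Q1, h1, h2, h3, h4, rfl⟩ := hf
  obtain ⟨P2, Q2, h5, h6, h7, h8, rfl⟩ := hg
  refine ⟨P1 * Q2 + Q1 * P2, Q1 * Q2, ?_, mul_ne_zero h2 h6, ?_, coeff_mul_nonneg h4 h8, ?_⟩
  · exact add_pos_ne_zero (mul_ne_zero h1 h6) (coeff_mul_nonneg h3 h8) (coeff_mul_nonneg h4 h7)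
  · intro u
    rw [MvPolynomial.coeff_add]
    exact add_nonneg (coeff_mul_nonneg h3 h8 u) (coeff_mul_nonneg h4 h7 u)
  · rw [map_add, map_mul, map_mul, map_mul]
    rw [div_add_div _ _ (algebraMap_ne_zero h2) (algebraMap_ne_zero h6)]

theorem posElem_inv {f : ClusterField n} (hf : PosElem f) : PosElem f⁻¹ := by
  obtain ⟨P, Q, h1, h2, h3, h4, rfl⟩ := hf
  exact ⟨Q, P, h2, h1, h4, h3, by rw [inv_div]⟩

theorem posElem_div {f g : ClusterField n} (hf : PosElem f) (hg : PosElem g) :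
    PosElem (f / g) := by
  rw [div_eq_mul_inv]
  exact posElem_mul hf (posElem_inv hg)

theorem posElem_pow {f : ClusterField n} (hf : PosElem f) (m : ℕ) : PosElem (f ^ m) := by
  induction m with
  | zero => simpa using posElem_one
  | succ m ih => rw [pow_succ]; exact posElem_mul ih hf

theorem posElem_zpow {f : ClusterField n} (hf : PosElem f) (m : ℤ) : PosElem (f ^ m) := by
  rcases m with m | m
  · rw [Int.ofNat_eq_coe, zpow_natCast]; exact posElem_pow hf m
  · rw [zpow_negSucc]; exact posElem_inv (posElem_pow hf (m + 1))

theorem posElem_prod {s : Finset (Fin n)} {f : Fin n → ClusterField n}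
    (hf : ∀ i ∈ s, PosElem (f i)) : PosElem (∏ i ∈ s, f i) := by
  classical
  induction s using Finset.induction with
  | empty => simpa using posElem_one
  | @insert _ _ hne ih =>
    rw [Finset.prod_insert hne]
    exact posElem_mul (hf _ (Finset.mem_insert_self _ _))
      (ih fun i hi => hf i (Finset.mem_insert_of_mem hi))

theorem posElem_yhat (B0 : Matrix (Fin n) (Fin n) ℤ) (j : Fin n) : PosElem (yhat B0 j) := by
  rw [yhat]
  exact posElem_mul (posElem_var _)
    (posElem_prod fun i _ => posElem_zpow (posElem_var _) _)

theorem posElem_Fhat (B0 : Matrix (Fin n) (Fin n) ℤ) (w : List (Fin n)) (l : Fin n) :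
    PosElem (Fhat B0 w l) := by
  induction w using List.reverseRecOn generalizing l with
  | nil => exact posElem_one
  | append_singleton w k ih =>
    rw [Fhat_append]
    rcases eq_or_ne l k with hlk | hlk
    · rw [hlk]
      show PosElem (FhatStep B0 (Bmat B0 w) (Fhat B0 w) k k)
      simp only [FhatStep, if_pos rfl]
      refine posElem_div (posElem_add ?_ ?_) (ih k) <;>
        exact posElem_mul (posElem_prod fun j _ => posElem_pow (posElem_yhat B0 j) _)
          (posElem_prod fun i _ => posElem_pow (ih i) _)
    · show PosElem (FhatStep B0 (Bmat B0 w) (Fhat B0 w) k l)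
      simp only [FhatStep, if_neg hlk]
      exact ih l

theorem Fhat_ne_zero (B0 : Matrix (Fin n) (Fin n) ℤ) (w : List (Fin n)) (l : Fin n) :
    Fhat B0 w l ≠ 0 := posElem_ne_zero (posElem_Fhat B0 w l)

/-! ### Injectivity of `v ↦ x^v` -/

theorem prod_X_pow_eq_monomial' (a : Fin n → ℕ) (s : Finset (Fin n)) :
    (∏ i ∈ s, (MvPolynomial.X (Sum.inl i) : MvPolynomial (Fin n ⊕ Fin n) ℚ) ^ a i)
      = MvPolynomial.monomial (∑ i ∈ s, Finsupp.single (Sum.inl i) (a i)) (1 : ℚ) := by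
  classical
  induction s using Finset.induction with
  | empty => simp
  | @insert _ _ hne ih =>
    rw [Finset.prod_insert hne, Finset.sum_insert hne, ih,
      MvPolynomial.X_pow_eq_monomial, MvPolynomial.monomial_mul, one_mul]

theorem monomial_exp_inj {s t : (Fin n ⊕ Fin n) →₀ ℕ}
    (h : MvPolynomial.monomial s (1 : ℚ) = MvPolynomial.monomial t 1) : s = t := by
  by_contra hst
  have := congrArg (MvPolynomial.coeff s) h
  rw [MvPolynomial.coeff_monomial, MvPolynomial.coeff_monomial, if_pos rfl,
    if_neg (by exact fun hc => hst hc.symm)] at this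
  norm_num at this

theorem xmon_eq_div (v : Fin n → ℤ) :
    xmon n v = (algebraMap (MvPolynomial (Fin n ⊕ Fin n) ℚ) (ClusterField n)
        (∏ i, MvPolynomial.X (Sum.inl i) ^ (v i).toNat))
      / (algebraMap (MvPolynomial (Fin n ⊕ Fin n) ℚ) (ClusterField n)
        (∏ i, MvPolynomial.X (Sum.inl i) ^ (-(v i)).toNat)) := by
  rw [map_prod, map_prod, xmon, ← Finset.prod_div_distrib]
  refine Finset.prod_congr rfl fun i _ => ?_
  rw [map_pow, map_pow]
  have hv : v i = (((v i).toNat : ℤ)) - (((-(v i)).toNat : ℤ)) := by omega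
  conv_lhs => rw [hv]
  rw [zpow_sub₀ (xv_ne_zero i), zpow_natCast, zpow_natCast]
  rfl

theorem xmon_inj {v w : Fin n → ℤ} (h : xmon n v = xmon n w) : v = w := by
  rw [xmon_eq_div, xmon_eq_div] at h
  have hne : ∀ (a : Fin n → ℕ),
      (∏ i, (MvPolynomial.X (Sum.inl i) : MvPolynomial (Fin n ⊕ Fin n) ℚ) ^ a i) ≠ 0 :=
    fun a => Finset.prod_ne_zero_iff.2 fun i _ => pow_ne_zero _ (MvPolynomial.X_ne_zero _)
  rw [div_eq_div_iff (algebraMap_ne_zero (hne _)) (algebraMap_ne_zero (hne _)),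
    ← map_mul, ← map_mul] at h
  have h2 := IsFractionRing.injective (MvPolynomial (Fin n ⊕ Fin n) ℚ) (ClusterField n) h
  rw [prod_X_pow_eq_monomial', prod_X_pow_eq_monomial', prod_X_pow_eq_monomial',
    prod_X_pow_eq_monomial', MvPolynomial.monomial_mul, MvPolynomial.monomial_mul] at h2
  rw [one_mul] at h2
  have h3 := monomial_exp_inj h2
  funext r
  have h4 := congrArg (fun (s : (Fin n ⊕ Fin n) →₀ ℕ) => s (Sum.inl r)) h3
  simp only [Finsupp.coe_add, Pi.add_apply, Finsupp.coe_finset_sum, Finset.sum_apply] at h4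
  have hs : ∀ (a : Fin n → ℕ),
      (∑ c, (Finsupp.single (Sum.inl c : Fin n ⊕ Fin n) (a c)) (Sum.inl r)) = a r := by
    intro a
    have hterm : ∀ c, (Finsupp.single (Sum.inl c : Fin n ⊕ Fin n) (a c)) (Sum.inl r)
        = if c = r then a c else 0 := by
      intro c
      simp [Finsupp.single_apply]
    rw [Finset.sum_congr rfl fun c _ => hterm c, Finset.sum_ite_eq' Finset.univ r a]
    simp
  rw [hs, hs, hs, hs] at h4
  omega

/-- The `g`-vectors satisfy the initial conditions and the
recurrences, and they are uniquely determined by them. -/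
theorem gVector_recurrence (n : ℕ) (hn : 1 ≤ n)
    (B0 : Matrix (Fin n) (Fin n) ℤ)
    (d : Fin n → ℤ) (hd : ∀ i, 0 < d i)
    (hskew : ∀ i j, d i * B0 i j = -(d j * B0 j i)) :
    (∀ g : List (Fin n) → Fin n → Fin n → ℤ,
        IsGVectorFamily B0 g → SatisfiesGRecurrence B0 g) ∧
    (∀ g₁ g₂ : List (Fin n) → Fin n → Fin n → ℤ,
        SatisfiesGRecurrence B0 g₁ → SatisfiesGRecurrence B0 g₂ → g₁ = g₂) := by
  refine ⟨?_, fun g₁ g₂ h₁ h₂ => grec_unique B0 g₁ g₂ h₁ h₂⟩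
  intro g hg
  have hfam := gvec_isFamily hd hskew
  have hgg : g = gvec B0 := by
    funext w l
    have h1 := hg w l
    have h2 := hfam w l
    have h3 : (∏ i, xv n i ^ g w l i) * Fhat B0 w l
        = (∏ i, xv n i ^ gvec B0 w l i) * Fhat B0 w l := by
      rw [← h1, ← h2]
    exact xmon_inj (mul_right_cancel₀ (Fhat_ne_zero B0 w l) h3)
  rw [hgg]
  exact gvec_satisfies B0

end
end

section
/- (Laurent phenomenon for generalized Y-systems.) For the Y-system associated with (A, ε), every element y_{j;m} with ε(j) = (−1)^{m−1}, viewed as a rational function in the initial data u₁,…,uₙ, is a Laurent polynomial with integer coefficients: y_{j;m} ∈ ℤ[u₁^{±1},…,uₙ^{±1}]. -/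
/-! Statement 9 (Fomin–Zelevinsky, "Cluster algebras IV", Theorem 8.8):
Laurent phenomenon for generalized Y-systems. -/

open scoped BigOperators Classical

noncomputable section
set_option synthInstance.maxHeartbeats 1000000
set_option maxHeartbeats 2000000

/-- The field `ℚ(u₁,…,uₙ)` of rational functions in the initial data. -/
abbrev UField (n : ℕ) : Type := FractionRing (MvPolynomial (Fin n) ℚ)

/-- The initial variable `uⱼ`. -/
def uv (n : ℕ) (j : Fin n) : UField n :=
  algebraMap (MvPolynomial (Fin n) ℚ) (UField n) (MvPolynomial.X j)

/-- The upward half of the `Y`-system: `ZY A ε r j = y_{j;r}` if `ε j = (−1)^{r−1}`,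
and `ZY A ε r j = y_{j;r−1}` otherwise; `ZY A ε 0 = (u₁,…,uₙ)` encodes the
initial conditions `y_{i;−1} = uᵢ` (`ε i = 1`), `y_{j;0} = uⱼ` (`ε j = −1`). -/
def ZY {n : ℕ} (A : Matrix (Fin n) (Fin n) ℤ) (ε : Fin n → ℤˣ) : ℕ → Fin n → UField n
  | 0 => uv n
  | (r + 1) => fun j =>
      if ε j = (-1 : ℤˣ) ^ r then
        (ZY A ε r j)⁻¹ *
          ∏ i ∈ Finset.univ.filter (fun i => ε i = -ε j), (ZY A ε r i + 1) ^ (-(A i j)).toNat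
      else ZY A ε r j

/-- The downward half of the `Y`-system: for `s ≥ 1`, `VY A ε s j = y_{j;−s}` if
`ε j = (−1)^{s+1}`, and `VY A ε s j = y_{j;−s−1}` otherwise. -/
def VY {n : ℕ} (A : Matrix (Fin n) (Fin n) ℤ) (ε : Fin n → ℤˣ) : ℕ → Fin n → UField n
  | 0 => uv n
  | 1 => uv n
  | (s + 2) => fun j =>
      if ε j = (-1 : ℤˣ) ^ (s + 1) then
        (VY A ε (s + 1) j)⁻¹ *
          ∏ i ∈ Finset.univ.filter (fun i => ε i = -ε j),
            (VY A ε (s + 1) i + 1) ^ (-(A i j)).toNat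
      else VY A ε (s + 1) j

/-- The element `y_{j;m}` of the `Y`-system associated with `(A, ε)` (meaningful
for `ε j = (−1)^{m−1}`). -/
def Ysys {n : ℕ} (A : Matrix (Fin n) (Fin n) ℤ) (ε : Fin n → ℤˣ) (m : ℤ) (j : Fin n) :
    UField n :=
  if 0 ≤ m then ZY A ε m.toNat j else VY A ε (-m).toNat j

namespace YSysAux

open MvPolynomial

variable {n : ℕ}

/-- Integer polynomial ring in the variables. -/
abbrev Rz (n : ℕ) := MvPolynomial (Fin n) ℤ

/-- The canonical embedding of integer polynomials into the field `ℚ(u)`. -/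
def iz (n : ℕ) : Rz n →+* UField n :=
  (algebraMap (MvPolynomial (Fin n) ℚ) (UField n)).comp
    (MvPolynomial.map (Int.castRingHom ℚ))


/-- The target subring of integer Laurent polynomials. -/
def LaurentR (n : ℕ) : Subring (UField n) :=
  Subring.closure (Set.range (uv n) ∪ Set.range (fun j => (uv n j)⁻¹))

variable (A : Matrix (Fin n) (Fin n) ℤ) (ε : Fin n → ℤˣ)

def bexp (i j : Fin n) : ℕ := (-(A i j)).toNat

def filt (j : Fin n) : Finset (Fin n) := Finset.univ.filter (fun i => ε i = -ε j)

def Npoly (i : Fin n) : Rz n := ∏ j ∈ filt ε i, (X j + 1) ^ bexp A j i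

def Uden (j : Fin n) : Rz n := ∏ i ∈ filt ε j, (X i) ^ bexp A i j

def Mnum (j : Fin n) : Rz n := ∏ i ∈ filt ε j, (Npoly A ε i + X i) ^ bexp A i j

def Gpoly (j : Fin n) : Rz n := Mnum A ε j + X j * Uden A ε j

/-- Partial evaluation at `u j = -1`. -/
def phi (j : Fin n) : Rz n →+* Rz n :=
  eval₂Hom MvPolynomial.C (fun k => if k = j then -1 else X k)

/-- Evaluation at `u j = -1`, all other variables `1`. -/
def evalS (j : Fin n) : Rz n →+* ℤ :=
  (MvPolynomial.eval (fun k => if k = j then (-1 : ℤ) else 1))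

/-- Evaluation at all variables `1`. -/
def evalOne : Rz n →+* ℤ := (MvPolynomial.eval (fun _ => (1 : ℤ)))

/-- Partial evaluation keeping only `u j` as a one-variable polynomial, others `1`. -/
def psij (j : Fin n) : Rz n →+* Polynomial ℤ :=
  eval₂Hom Polynomial.C (fun k => if k = j then Polynomial.X else 1)

lemma uv_eq (k : Fin n) : uv n k = iz n (X k) := by
  simp [uv, iz]

lemma iz_inj : Function.Injective (iz n) := by
  refine (IsFractionRing.injective (MvPolynomial (Fin n) ℚ) (UField n)).comp ?_
  exact MvPolynomial.map_injective _ (fun a b h => by simpa using h)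

lemma iz_ne_zero {p : Rz n} (h : p ≠ 0) : iz n p ≠ 0 := by
  intro h0
  exact h (iz_inj (by simpa using h0))

lemma ne_zero_of_evalOne {p : Rz n} (h : evalOne p ≠ 0) : p ≠ 0 := by
  intro h0; rw [h0] at h; simp [evalOne] at h

lemma uv_ne (k : Fin n) : uv n k ≠ 0 := by
  rw [uv_eq]
  exact iz_ne_zero (ne_zero_of_evalOne (by simp [evalOne]))

lemma iz_mem (p : Rz n) : iz n p ∈ LaurentR n := by
  induction p using MvPolynomial.induction_on with
  | C a =>
      have : iz n (MvPolynomial.C a) = (a : UField n) := by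
        rw [show (MvPolynomial.C a : Rz n) = (a : Rz n) from by simp]
        rw [map_intCast]
      rw [this]
      exact intCast_mem _ a
  | add p q hp hq => rw [map_add]; exact add_mem hp hq
  | mul_X p k hp =>
      rw [map_mul]
      refine mul_mem hp ?_
      rw [← uv_eq]
      exact Subring.subset_closure (Or.inl ⟨k, rfl⟩)

lemma uv_mem (k : Fin n) : uv n k ∈ LaurentR n :=
  Subring.subset_closure (Or.inl ⟨k, rfl⟩)

lemma uv_inv_mem (k : Fin n) : (uv n k)⁻¹ ∈ LaurentR n :=
  Subring.subset_closure (Or.inr ⟨k, rfl⟩)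

end YSysAux

namespace YSysAux
open MvPolynomial
variable {n : ℕ} (A : Matrix (Fin n) (Fin n) ℤ) (ε : Fin n → ℤˣ)

lemma phi_X (j k : Fin n) : phi j (X k) = if k = j then -1 else X k := by
  simp [phi]

lemma phi_X_self (j : Fin n) : phi j (X j) = -1 := by simp [phi]

lemma phi_X_add_one_self (j : Fin n) : phi j (X j + 1) = 0 := by
  rw [map_add, phi_X_self, map_one]; ring

/-- Division: if `f` vanishes under `phi j` then `X j + 1` divides `f`. -/
lemma dvd_sub_phi (j : Fin n) (f : Rz n) : (X j + 1) ∣ (f - phi j f) := by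
  induction f using MvPolynomial.induction_on with
  | C a => simp [phi]
  | add p q hp hq =>
      rw [map_add]
      have : p + q - (phi j p + phi j q) = (p - phi j p) + (q - phi j q) := by ring
      rw [this]
      exact dvd_add hp hq
  | mul_X p k hp =>
      rw [map_mul, phi_X]
      by_cases hk : k = j
      · subst hk
        rw [if_pos rfl]
        have : p * X k - phi k p * (-1)
            = (p - phi k p) * X k + phi k p * (X k + 1) := by ring
        rw [this]
        exact dvd_add (Dvd.dvd.mul_right hp _) (Dvd.dvd.mul_left dvd_rfl _)
      · rw [if_neg hk]
        have : p * X k - phi j p * X k = (p - phi j p) * X k := by ring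
        rw [this]
        exact Dvd.dvd.mul_right hp _

lemma dvd_of_phi_eq_zero {j : Fin n} {f : Rz n} (h : phi j f = 0) : (X j + 1) ∣ f := by
  have := dvd_sub_phi j f
  rwa [h, sub_zero] at this

/-- The local ring at the prime `u j + 1`: elements with a representation whose
denominator does not vanish at `u j = -1`. -/
def Oring (j : Fin n) : Subring (UField n) where
  carrier := {x | ∃ a b : Rz n, phi j b ≠ 0 ∧ x * iz n b = iz n a}
  one_mem' := ⟨1, 1, by simp [phi], by simp⟩
  zero_mem' := ⟨0, 1, by simp [phi], by simp⟩
  mul_mem' := by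
    rintro x y ⟨a, b, hb, hx⟩ ⟨c, d, hd, hy⟩
    refine ⟨a * c, b * d, ?_, ?_⟩
    · rw [map_mul]; exact mul_ne_zero hb hd
    · rw [map_mul, map_mul]
      calc x * y * (iz n b * iz n d) = (x * iz n b) * (y * iz n d) := by ring
        _ = iz n a * iz n c := by rw [hx, hy]
  add_mem' := by
    rintro x y ⟨a, b, hb, hx⟩ ⟨c, d, hd, hy⟩
    refine ⟨a * d + c * b, b * d, ?_, ?_⟩
    · rw [map_mul]; exact mul_ne_zero hb hd
    · rw [map_mul, map_add, map_mul, map_mul]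
      calc (x + y) * (iz n b * iz n d)
          = (x * iz n b) * iz n d + (y * iz n d) * iz n b := by ring
        _ = iz n a * iz n d + iz n c * iz n b := by rw [hx, hy]
  neg_mem' := by
    rintro x ⟨a, b, hb, hx⟩
    exact ⟨-a, b, hb, by rw [map_neg, ← hx]; ring⟩

lemma mem_Oring {j : Fin n} {x : UField n} (a b : Rz n) (hb : phi j b ≠ 0)
    (h : x * iz n b = iz n a) : x ∈ Oring j := ⟨a, b, hb, h⟩

lemma inv_mem_Oring {j : Fin n} {x : UField n} (a b : Rz n) (ha : phi j a ≠ 0)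
    (hb : phi j b ≠ 0) (hx : x ≠ 0) (h : x * iz n b = iz n a) : x⁻¹ ∈ Oring j := by
  refine ⟨b, a, ha, ?_⟩
  have : iz n a = x * iz n b := h.symm
  rw [this]
  field_simp

/-- `evalS j` factors through `phi j`. -/
lemma evalS_eq_evalOne_phi (j : Fin n) (f : Rz n) : evalS j f = evalOne (phi j f) := by
  have : (evalS j : Rz n →+* ℤ) = (evalOne : Rz n →+* ℤ).comp (phi j) := by
    apply MvPolynomial.ringHom_ext
    · intro a; simp [evalS, evalOne, phi]
    · intro k
      by_cases hk : k = j <;> simp [evalS, evalOne, phi, hk]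
  rw [this]; rfl

lemma phi_ne_zero_of_evalS {j : Fin n} {f : Rz n} (h : evalS j f ≠ 0) : phi j f ≠ 0 := by
  intro h0
  rw [evalS_eq_evalOne_phi, h0] at h
  simp at h

lemma evalS_psij (j : Fin n) (f : Rz n) :
    evalS j f = Polynomial.eval (-1 : ℤ) (psij j f) := by
  have : (evalS j : Rz n →+* ℤ)
      = (Polynomial.evalRingHom (-1 : ℤ)).comp (psij j) := by
    apply MvPolynomial.ringHom_ext
    · intro a; simp [evalS, evalOne, psij]
    · intro k
      by_cases hk : k = j <;> simp [evalS, psij, hk]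
  rw [this]; rfl

end YSysAux

namespace YSysAux
open MvPolynomial
variable {n : ℕ} (A : Matrix (Fin n) (Fin n) ℤ) (ε : Fin n → ℤˣ)

lemma mem_filt {i j : Fin n} : i ∈ filt ε j ↔ ε i = -ε j := by
  simp [filt]

lemma ne_of_mem_filt {i j : Fin n} (h : i ∈ filt ε j) : i ≠ j := by
  rw [mem_filt] at h
  intro hij
  subst hij
  have h2 : (ε i : ℤ) = -(ε i : ℤ) := by
    have := congrArg (Units.val) h
    simpa using this
  have h3 : (ε i : ℤ) ≠ 0 := Units.ne_zero _
  omega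

lemma filt_symm {i j : Fin n} (h : i ∈ filt ε j) : j ∈ filt ε i := by
  rw [mem_filt] at h ⊢
  rw [h]; simp

section evalSfacts

variable (j : Fin n)

lemma evalS_X (k : Fin n) : evalS j (X k) = if k = j then -1 else 1 := by
  simp [evalS]

lemma evalS_X_ne {k : Fin n} (h : k ≠ j) : evalS j (X k) = 1 := by
  rw [evalS_X, if_neg h]

lemma evalS_Npoly_nonneg (i : Fin n) : 0 ≤ evalS j (Npoly A ε i) := by
  rw [Npoly, map_prod]
  refine Finset.prod_nonneg fun k _ => ?_
  rw [map_pow]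
  refine pow_nonneg ?_ _
  rw [map_add, map_one, evalS_X]
  by_cases hk : k = j <;> simp [hk]

lemma evalS_Mnum_pos {k : Fin n} (hk : ε k = ε j) : 0 < evalS j (Mnum A ε k) := by
  rw [Mnum, map_prod]
  refine Finset.prod_pos fun i hi => ?_
  rw [map_pow]
  refine pow_pos ?_ _
  have hij : i ≠ j := by
    rw [mem_filt] at hi
    intro h; subst h
    rw [hk] at hi
    have h2 : (ε i : ℤ) = -(ε i : ℤ) := by
      have := congrArg (Units.val) hi; simpa using this
    have h3 : (ε i : ℤ) ≠ 0 := Units.ne_zero _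
    omega
  rw [map_add, evalS_X_ne _ hij]
  have := evalS_Npoly_nonneg A ε j i
  omega

lemma evalS_Uden_mul_pos {k : Fin n} (hk : ε k = ε j) :
    evalS j (X k * Uden A ε k) ≠ 0 := by
  rw [map_mul, Uden, map_prod]
  refine mul_ne_zero ?_ ?_
  · rw [evalS_X]; by_cases h : k = j <;> simp [h]
  · refine Finset.prod_ne_zero_iff.2 fun i hi => ?_
    rw [map_pow]
    refine pow_ne_zero _ ?_
    rw [evalS_X]
    by_cases h : i = j <;> simp [h]

lemma evalOne_X_add_one (k : Fin n) : evalOne ((X k : Rz n) + 1) = 2 := by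
  simp [evalOne]

lemma evalOne_Npoly_pos (i : Fin n) : 0 < evalOne (Npoly A ε i) := by
  rw [Npoly, map_prod]
  refine Finset.prod_pos fun k _ => ?_
  rw [map_pow, evalOne_X_add_one]
  positivity

lemma evalOne_Mnum_pos (k : Fin n) : 0 < evalOne (Mnum A ε k) := by
  rw [Mnum, map_prod]
  refine Finset.prod_pos fun i hi => ?_
  rw [map_pow, map_add]
  have h1 := evalOne_Npoly_pos A ε i
  have h2 : evalOne (X i : Rz n) = 1 := by simp [evalOne]
  refine pow_pos ?_ _
  omega

lemma evalOne_Uden_mul (k : Fin n) : evalOne (X k * Uden A ε k) = 1 := by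
  rw [map_mul, Uden, map_prod]
  have h2 : evalOne (X k : Rz n) = 1 := by simp [evalOne]
  rw [h2, one_mul]
  refine Finset.prod_eq_one fun i _ => ?_
  rw [map_pow]
  have : evalOne (X i : Rz n) = 1 := by simp [evalOne]
  rw [this, one_pow]

end evalSfacts

section phiG

variable (hsw : ∀ i j : Fin n, 0 < bexp A i j → 0 < bexp A j i)

lemma phi_Npoly_eq_zero {i j : Fin n} (hj : j ∈ filt ε i) (hb : 0 < bexp A j i) :
    phi j (Npoly A ε i) = 0 := by
  rw [Npoly, map_prod]
  refine Finset.prod_eq_zero hj ?_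
  rw [map_pow, phi_X_add_one_self, zero_pow (by omega)]

include hsw in
lemma phi_G_eq_zero (j : Fin n) : phi j (Gpoly A ε j) = 0 := by
  rw [Gpoly, map_add, map_mul, phi_X_self]
  have hM : phi j (Mnum A ε j) = phi j (Uden A ε j) := by
    rw [Mnum, Uden, map_prod, map_prod]
    refine Finset.prod_congr rfl fun i hi => ?_
    rw [map_pow, map_pow]
    rcases Nat.eq_zero_or_pos (bexp A i j) with hb | hb
    · rw [hb, pow_zero, pow_zero]
    · have hji : j ∈ filt ε i := filt_symm ε hi
      have hbji : 0 < bexp A j i := hsw i j hb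
      rw [map_add, phi_Npoly_eq_zero A ε hji hbji, zero_add, phi_X,
        if_neg (ne_of_mem_filt ε hi)]
  rw [hM]; ring

/-- The cofactor of `X j + 1` in `Gpoly j`. -/
def Hpoly (j : Fin n) : Rz n :=
  (dvd_of_phi_eq_zero (phi_G_eq_zero A ε hsw j)).choose

lemma Hpoly_spec (j : Fin n) :
    Gpoly A ε j = (X j + 1) * Hpoly A ε hsw j :=
  (dvd_of_phi_eq_zero (phi_G_eq_zero A ε hsw j)).choose_spec

end phiG

end YSysAux

namespace YSysAux
open MvPolynomial
variable {n : ℕ} (A : Matrix (Fin n) (Fin n) ℤ) (ε : Fin n → ℤˣ)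

/-- A univariate integer polynomial with nonnegative value and derivative value at `-1`. -/
def Pgood (p : Polynomial ℤ) : Prop :=
  0 ≤ p.eval (-1) ∧ 0 ≤ (Polynomial.derivative p).eval (-1)

lemma Pgood_one : Pgood 1 := by constructor <;> simp [Pgood]

lemma Pgood_const {c : ℤ} (h : 0 ≤ c) : Pgood (Polynomial.C c) := by
  constructor <;> simp [Pgood, h]

lemma Pgood_two : Pgood (2 : Polynomial ℤ) := by constructor <;> simp

lemma Pgood_X_add_one : Pgood (Polynomial.X + 1) := by constructor <;> simp

lemma Pgood.mul {p q : Polynomial ℤ} (hp : Pgood p) (hq : Pgood q) : Pgood (p * q) := by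
  obtain ⟨h1, h2⟩ := hp; obtain ⟨h3, h4⟩ := hq
  constructor
  · rw [Polynomial.eval_mul]; exact mul_nonneg h1 h3
  · rw [Polynomial.derivative_mul, Polynomial.eval_add, Polynomial.eval_mul,
      Polynomial.eval_mul]
    have := mul_nonneg h2 h3
    have := mul_nonneg h1 h4
    omega

lemma Pgood.add {p q : Polynomial ℤ} (hp : Pgood p) (hq : Pgood q) : Pgood (p + q) := by
  obtain ⟨h1, h2⟩ := hp; obtain ⟨h3, h4⟩ := hq
  constructor
  · rw [Polynomial.eval_add]; omega
  · rw [map_add, Polynomial.eval_add]; omega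

lemma Pgood.pow {p : Polynomial ℤ} (hp : Pgood p) (m : ℕ) : Pgood (p ^ m) := by
  induction m with
  | zero => simpa using Pgood_one
  | succ m ih => rw [pow_succ]; exact ih.mul hp

lemma Pgood.prod {s : Finset (Fin n)} {f : Fin n → Polynomial ℤ}
    (h : ∀ i ∈ s, Pgood (f i)) : Pgood (∏ i ∈ s, f i) := by
  classical
  induction s using Finset.induction_on with
  | empty => simpa using Pgood_one
  | insert _ _ hx ih =>
      rw [Finset.prod_insert hx]
      exact (h _ (Finset.mem_insert_self _ _)).mul
        (ih fun i hi => h i (Finset.mem_insert_of_mem hi))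

section psifacts

variable (j : Fin n)

lemma psij_X (k : Fin n) : psij j (X k) = if k = j then Polynomial.X else 1 := by
  simp [psij]

lemma psij_Npoly_Pgood (i : Fin n) : Pgood (psij j (Npoly A ε i)) := by
  rw [Npoly, map_prod]
  refine Pgood.prod fun k _ => ?_
  rw [map_pow]
  refine Pgood.pow ?_ _
  rw [map_add, map_one, psij_X]
  by_cases hk : k = j
  · rw [if_pos hk]; exact Pgood_X_add_one
  · rw [if_neg hk]
    exact Pgood_one.add Pgood_one

lemma psij_Mnum_Pgood {k : Fin n} (hk : ε k = ε j) : Pgood (psij j (Mnum A ε k)) := by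
  rw [Mnum, map_prod]
  refine Pgood.prod fun i hi => ?_
  rw [map_pow]
  refine Pgood.pow ?_ _
  rw [map_add, psij_X]
  have hij : i ≠ j := by
    rw [mem_filt] at hi
    intro h; subst h
    rw [hk] at hi
    have h2 : (ε i : ℤ) = -(ε i : ℤ) := by
      have := congrArg (Units.val) hi; simpa using this
    have h3 : (ε i : ℤ) ≠ 0 := Units.ne_zero _
    omega
  rw [if_neg hij]
  exact (psij_Npoly_Pgood A ε j i).add Pgood_one

lemma psij_Uden_self (hj : ε j = -1 ∨ True) : psij j (Uden A ε j) = 1 := by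
  rw [Uden, map_prod]
  refine Finset.prod_eq_one fun i hi => ?_
  rw [map_pow, psij_X, if_neg (ne_of_mem_filt ε hi), one_pow]

/-- The key first-order vanishing: the cofactor `Hpoly j` of `X j + 1` in `Gpoly j`
has positive value at the special point. -/
lemma evalS_Hpoly_self_pos (hsw : ∀ i j : Fin n, 0 < bexp A i j → 0 < bexp A j i) :
    0 < evalS j (Hpoly A ε hsw j) := by
  have hG : psij j (Gpoly A ε j)
      = (Polynomial.X + 1) * psij j (Hpoly A ε hsw j) := by
    rw [Hpoly_spec A ε hsw j, map_mul, map_add, map_one, psij_X, if_pos rfl]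
  -- derivative relation
  have hder : Polynomial.eval (-1 : ℤ) (Polynomial.derivative (psij j (Gpoly A ε j)))
      = Polynomial.eval (-1 : ℤ) (psij j (Hpoly A ε hsw j)) := by
    rw [hG, Polynomial.derivative_mul]
    simp
  -- compute the derivative of ψ G at -1
  have hg : psij j (Gpoly A ε j) = psij j (Mnum A ε j) + Polynomial.X := by
    rw [Gpoly, map_add, map_mul, psij_X, if_pos rfl, psij_Uden_self A ε j (Or.inr trivial),
      mul_one]
  have hpos : 1 ≤ Polynomial.eval (-1 : ℤ)
      (Polynomial.derivative (psij j (Gpoly A ε j))) := by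
    rw [hg, map_add]
    have := (psij_Mnum_Pgood A ε j (rfl)).2
    simp only [Polynomial.derivative_X, Polynomial.eval_add, Polynomial.eval_one]
    omega
  rw [evalS_psij, ← hder]
  omega

lemma evalS_Hpoly_other_pos (hsw : ∀ i j : Fin n, 0 < bexp A i j → 0 < bexp A j i)
    {j' : Fin n} (hne : j' ≠ j) (hsame : ε j' = ε j) :
    0 < evalS j (Hpoly A ε hsw j') := by
  have h2 : evalS j ((X j' + 1) * Hpoly A ε hsw j') = evalS j (Gpoly A ε j') := by
    rw [← Hpoly_spec]
  rw [map_mul, map_add, map_one, evalS_X_ne j hne] at h2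
  have hg : 0 < evalS j (Gpoly A ε j') := by
    rw [Gpoly, map_add, map_mul, evalS_X_ne j hne]
    have h3 := evalS_Mnum_pos A ε j hsame
    have h4 : evalS j (Uden A ε j') = 1 := by
      rw [Uden, map_prod]
      refine Finset.prod_eq_one fun i hi => ?_
      have hij : i ≠ j := by
        rw [mem_filt] at hi
        intro h; subst h
        rw [hsame] at hi
        have h5 : (ε i : ℤ) = -(ε i : ℤ) := by
          have := congrArg (Units.val) hi; simpa using this
        have h6 : (ε i : ℤ) ≠ 0 := Units.ne_zero _
        omega
      rw [map_pow, evalS_X_ne j hij, one_pow]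
    rw [h4]
    omega
  omega

end psifacts

end YSysAux

namespace YSysAux
open MvPolynomial
variable {n : ℕ} (A : Matrix (Fin n) (Fin n) ℤ) (ε : Fin n → ℤˣ)

lemma units_cases (k : Fin n) : ε k = 1 ∨ ε k = -1 := Int.units_eq_one_or _

lemma neg_one_ne_one' : (-1 : ℤˣ) ≠ 1 := by decide

lemma aux_cancel (u a P Q : UField n) (ha : a ≠ 0) (hu : u ≠ 0) :
    (a * u⁻¹)⁻¹ * (a * P * Q⁻¹) = u * P * Q⁻¹ := by
  rw [mul_inv, inv_inv]
  rw [show a⁻¹ * u * (a * P * Q⁻¹) = (a⁻¹ * a) * (u * P * Q⁻¹) from by ring,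
    inv_mul_cancel₀ ha, one_mul]

lemma add_one_div (a b : UField n) (hb : b ≠ 0) : a * b⁻¹ + 1 = (a + b) * b⁻¹ := by
  field_simp

lemma ZY_zero (k : Fin n) : ZY A ε 0 k = uv n k := rfl

lemma ZY_succ (r : ℕ) (j : Fin n) :
    ZY A ε (r + 1) j = if ε j = (-1 : ℤˣ) ^ r then
        (ZY A ε r j)⁻¹ * ∏ i ∈ filt ε j, (ZY A ε r i + 1) ^ bexp A i j
      else ZY A ε r j := rfl

lemma neg_eps_of_mem_filt {i k : Fin n} (hk : ε k = -1) (hi : i ∈ filt ε k) : ε i = 1 := by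
  rw [mem_filt] at hi
  rw [hi, hk]; simp

lemma pos_eps_of_mem_filt {i k : Fin n} (hk : ε k = 1) (hi : i ∈ filt ε k) : ε i = -1 := by
  rw [mem_filt] at hi
  rw [hi, hk]

lemma iz_Npoly_ne (k : Fin n) : iz n (Npoly A ε k) ≠ 0 :=
  iz_ne_zero (ne_zero_of_evalOne (by have := evalOne_Npoly_pos A ε k; omega))

lemma iz_Mnum_ne (k : Fin n) : iz n (Mnum A ε k) ≠ 0 :=
  iz_ne_zero (ne_zero_of_evalOne (by have := evalOne_Mnum_pos A ε k; omega))

lemma iz_XUden_ne (k : Fin n) : iz n (X k * Uden A ε k) ≠ 0 :=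
  iz_ne_zero (ne_zero_of_evalOne (by rw [evalOne_Uden_mul]; omega))

lemma ZY_one_pos {k : Fin n} (h : ε k = 1) :
    ZY A ε 1 k = iz n (Npoly A ε k) * (uv n k)⁻¹ := by
  rw [ZY_succ, if_pos (by rw [pow_zero, h])]
  have hprod : ∏ i ∈ filt ε k, (ZY A ε 0 i + 1) ^ bexp A i k = iz n (Npoly A ε k) := by
    rw [Npoly, map_prod]
    refine Finset.prod_congr rfl fun i _ => ?_
    rw [ZY_zero, map_pow, map_add, map_one, ← uv_eq]
  rw [hprod, ZY_zero, mul_comm]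

lemma ZY_one_neg {k : Fin n} (h : ε k = -1) : ZY A ε 1 k = uv n k := by
  rw [ZY_succ, if_neg (by rw [pow_zero, h]; exact neg_one_ne_one'), ZY_zero]

lemma ZY_two_pos {k : Fin n} (h : ε k = 1) : ZY A ε 2 k = ZY A ε 1 k := by
  rw [ZY_succ, if_neg (by rw [pow_one, h]; exact fun hh => neg_one_ne_one' hh.symm)]

lemma ZY_two_neg {k : Fin n} (h : ε k = -1) :
    ZY A ε 2 k = iz n (Mnum A ε k) * (iz n (X k * Uden A ε k))⁻¹ := by
  rw [ZY_succ, if_pos (by rw [pow_one, h])]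
  have hprod : ∏ i ∈ filt ε k, (ZY A ε 1 i + 1) ^ bexp A i k
      = iz n (Mnum A ε k) * (iz n (Uden A ε k))⁻¹ := by
    have : ∀ i ∈ filt ε k, (ZY A ε 1 i + 1) ^ bexp A i k
        = iz n ((Npoly A ε i + X i) ^ bexp A i k) * (iz n ((X i) ^ bexp A i k))⁻¹ := by
      intro i hi
      rw [ZY_one_pos A ε (neg_eps_of_mem_filt ε h hi),
        add_one_div _ _ (uv_ne i), uv_eq, ← map_add, mul_pow, inv_pow, ← map_pow,
        ← map_pow]
    rw [Finset.prod_congr rfl this, Finset.prod_mul_distrib, Mnum, Uden, map_prod, map_prod]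
    rw [← Finset.prod_inv_distrib]
  rw [hprod, ZY_one_neg A ε h, map_mul, mul_inv, uv_eq]
  ring

lemma ZY_three_neg {k : Fin n} (h : ε k = -1) : ZY A ε 3 k = ZY A ε 2 k := by
  rw [ZY_succ, if_neg (by rw [h]; decide)]

lemma ZY_three_pos (hsw : ∀ i j : Fin n, 0 < bexp A i j → 0 < bexp A j i)
    {k : Fin n} (h : ε k = 1) :
    ZY A ε 3 k = iz n (X k * ∏ j ∈ filt ε k, (Hpoly A ε hsw j) ^ bexp A j k) *
      (iz n (∏ j ∈ filt ε k, (X j * Uden A ε j) ^ bexp A j k))⁻¹ := by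
  rw [ZY_succ, if_pos (by rw [h]; decide)]
  have hprod : ∏ j ∈ filt ε k, (ZY A ε 2 j + 1) ^ bexp A j k
      = iz n (∏ j ∈ filt ε k, (Gpoly A ε j) ^ bexp A j k) *
        (iz n (∏ j ∈ filt ε k, (X j * Uden A ε j) ^ bexp A j k))⁻¹ := by
    have : ∀ j ∈ filt ε k, (ZY A ε 2 j + 1) ^ bexp A j k
        = iz n ((Gpoly A ε j) ^ bexp A j k) * (iz n ((X j * Uden A ε j) ^ bexp A j k))⁻¹ := by
      intro j hj
      rw [ZY_two_neg A ε (pos_eps_of_mem_filt ε h hj),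
        add_one_div _ _ (iz_XUden_ne A ε j), ← map_add, ← Gpoly, mul_pow, inv_pow,
        ← map_pow, ← map_pow]
    rw [Finset.prod_congr rfl this, Finset.prod_mul_distrib]
    congr 1
    · exact (map_prod _ _ _).symm
    · rw [map_prod]
      exact Finset.prod_inv_distrib _
  have hG : iz n (∏ j ∈ filt ε k, (Gpoly A ε j) ^ bexp A j k)
      = iz n (Npoly A ε k) * iz n (∏ j ∈ filt ε k, (Hpoly A ε hsw j) ^ bexp A j k) := by
    rw [← map_mul]
    congr 1
    rw [Npoly, ← Finset.prod_mul_distrib]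
    refine Finset.prod_congr rfl fun j _ => ?_
    rw [← mul_pow, ← Hpoly_spec]
  rw [hprod, ZY_two_pos A ε h, ZY_one_pos A ε h, hG]
  have hXk : iz n (X k * ∏ j ∈ filt ε k, (Hpoly A ε hsw j) ^ bexp A j k)
      = uv n k * iz n (∏ j ∈ filt ε k, (Hpoly A ε hsw j) ^ bexp A j k) := by
    rw [map_mul, ← uv_eq]
  have h1 : iz n (Npoly A ε k) ≠ 0 := iz_Npoly_ne A ε k
  have h2 : uv n k ≠ 0 := uv_ne k
  rw [hXk, aux_cancel _ _ _ _ h1 h2]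
end YSysAux

namespace YSysAux
open MvPolynomial
variable {n : ℕ} (A : Matrix (Fin n) (Fin n) ℤ) (ε : Fin n → ℤˣ)

/-- The negative-sign vertices. -/
def Qs : Finset (Fin n) := Finset.univ.filter (fun j => ε j = -1)

lemma mem_Qs {j : Fin n} : j ∈ Qs ε ↔ ε j = -1 := by simp [Qs]

lemma filt_eq_Qs {k : Fin n} (h : ε k = 1) : filt ε k = Qs ε := by
  ext i
  rw [mem_filt, mem_Qs, h]

section OringMem

lemma ZY3_mem_Oring (hsw : ∀ i j : Fin n, 0 < bexp A i j → 0 < bexp A j i)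
    {j : Fin n} (hj : ε j = -1) (k : Fin n) :
    ZY A ε 3 k ∈ Oring j ∧ (ZY A ε 3 k)⁻¹ ∈ Oring j := by
  rcases units_cases ε k with hk | hk
  · -- positive colour: the interesting case
    rw [ZY_three_pos A ε hsw hk]
    set num : Rz n := X k * ∏ j' ∈ filt ε k, (Hpoly A ε hsw j') ^ bexp A j' k with hnum
    set den : Rz n := ∏ j' ∈ filt ε k, (X j' * Uden A ε j') ^ bexp A j' k with hden
    have hphiden : phi j den ≠ 0 := by
      refine phi_ne_zero_of_evalS ?_
      rw [hden, map_prod]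
      refine Finset.prod_ne_zero_iff.2 fun j' hj' => ?_
      rw [map_pow]
      exact pow_ne_zero _ (evalS_Uden_mul_pos A ε j
        (by rw [pos_eps_of_mem_filt ε hk hj', hj]))
    have hphinum : phi j num ≠ 0 := by
      rw [hnum, map_mul, map_prod]
      refine mul_ne_zero ?_ ?_
      · rw [phi_X, if_neg (by intro hkj; subst hkj; rw [hj] at hk; exact neg_one_ne_one' hk)]
        exact MvPolynomial.X_ne_zero _
      · refine Finset.prod_ne_zero_iff.2 fun j' hj' => ?_
        rw [map_pow]
        refine pow_ne_zero _ ?_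
        by_cases hjj : j' = j
        · subst hjj
          exact phi_ne_zero_of_evalS (by have := evalS_Hpoly_self_pos A ε j' hsw; omega)
        · refine phi_ne_zero_of_evalS ?_
          have := evalS_Hpoly_other_pos A ε j hsw hjj
            (by rw [pos_eps_of_mem_filt ε hk hj', hj])
          omega
    have hdenne : iz n den ≠ 0 := by
      refine iz_ne_zero (ne_zero_of_evalOne ?_)
      rw [hden, map_prod]
      have : ∀ j' ∈ filt ε k, evalOne ((X j' * Uden A ε j') ^ bexp A j' k) = 1 := by
        intro j' _
        rw [map_pow, evalOne_Uden_mul, one_pow]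
      rw [Finset.prod_congr rfl this, Finset.prod_const_one]
      omega
    have hnumne : iz n num ≠ 0 := by
      refine iz_ne_zero ?_
      intro h0
      rw [h0, map_zero] at hphinum
      exact hphinum rfl
    have heq : (iz n num * (iz n den)⁻¹) * iz n den = iz n num :=
      inv_mul_cancel_right₀ hdenne _
    constructor
    · exact mem_Oring num den hphiden heq
    · exact inv_mem_Oring num den hphinum hphiden
        (mul_ne_zero hnumne (inv_ne_zero hdenne)) heq
  · -- negative colour
    rw [ZY_three_neg A ε hk, ZY_two_neg A ε hk]
    have hphiden : phi j (X k * Uden A ε k) ≠ 0 :=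
      phi_ne_zero_of_evalS (evalS_Uden_mul_pos A ε j (by rw [hk, hj]))
    have hphinum : phi j (Mnum A ε k) ≠ 0 :=
      phi_ne_zero_of_evalS (by have := evalS_Mnum_pos A ε j (by rw [hk, hj] : ε k = ε j); omega)
    have heq : (iz n (Mnum A ε k) * (iz n (X k * Uden A ε k))⁻¹) * iz n (X k * Uden A ε k)
        = iz n (Mnum A ε k) := by
      exact inv_mul_cancel_right₀ (iz_XUden_ne A ε k) _
    constructor
    · exact mem_Oring _ _ hphiden heq
    · exact inv_mem_Oring _ _ hphinum hphiden
        (mul_ne_zero (iz_Mnum_ne A ε k) (inv_ne_zero (iz_XUden_ne A ε k))) heq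

end OringMem

/-- Denominator polynomials: a monomial times a product of `(X j + 1)`-powers over `Qs`. -/
def dpoly (e m : Fin n → ℕ) : Rz n :=
  (∏ i, (X i) ^ (e i)) * ∏ j ∈ Qs ε, (X j + 1) ^ (m j)

lemma dpoly_zero : dpoly ε 0 0 = 1 := by
  simp [dpoly]

lemma dpoly_add (e₁ e₂ m₁ m₂ : Fin n → ℕ) :
    dpoly ε (e₁ + e₂) (m₁ + m₂) = dpoly ε e₁ m₁ * dpoly ε e₂ m₂ := by
  rw [dpoly, dpoly, dpoly]
  rw [show ∀ (a b c d : Rz n), (a * b) * (c * d) = (a * c) * (b * d) from fun a b c d => by ring]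
  congr 1
  · rw [← Finset.prod_mul_distrib]
    refine Finset.prod_congr rfl fun i _ => ?_
    simp [pow_add]
  · rw [← Finset.prod_mul_distrib]
    refine Finset.prod_congr rfl fun i _ => ?_
    simp [pow_add]

/-- The subring of elements with denominators that are monomials times
products of `(u j + 1)`, `j ∈ Qs`. -/
def Dring : Subring (UField n) where
  carrier := {x | ∃ (a : Rz n) (e m : Fin n → ℕ), x * iz n (dpoly ε e m) = iz n a}
  one_mem' := ⟨1, 0, 0, by rw [dpoly_zero]; simp⟩
  zero_mem' := ⟨0, 0, 0, by simp⟩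
  mul_mem' := by
    rintro x y ⟨a, e₁, m₁, hx⟩ ⟨c, e₂, m₂, hy⟩
    refine ⟨a * c, e₁ + e₂, m₁ + m₂, ?_⟩
    rw [dpoly_add, map_mul, map_mul]
    calc x * y * (iz n (dpoly ε e₁ m₁) * iz n (dpoly ε e₂ m₂))
        = (x * iz n (dpoly ε e₁ m₁)) * (y * iz n (dpoly ε e₂ m₂)) := by ring
      _ = iz n a * iz n c := by rw [hx, hy]
  add_mem' := by
    rintro x y ⟨a, e₁, m₁, hx⟩ ⟨c, e₂, m₂, hy⟩
    refine ⟨a * dpoly ε e₂ m₂ + c * dpoly ε e₁ m₁, e₁ + e₂, m₁ + m₂, ?_⟩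
    rw [dpoly_add, map_mul, map_add, map_mul, map_mul]
    calc (x + y) * (iz n (dpoly ε e₁ m₁) * iz n (dpoly ε e₂ m₂))
        = (x * iz n (dpoly ε e₁ m₁)) * iz n (dpoly ε e₂ m₂)
          + (y * iz n (dpoly ε e₂ m₂)) * iz n (dpoly ε e₁ m₁) := by ring
      _ = _ := by rw [hx, hy]
  neg_mem' := by
    rintro x ⟨a, e, m, hx⟩
    exact ⟨-a, e, m, by rw [map_neg, ← hx]; ring⟩

lemma single_pow_prod (k : Fin n) :
    (∏ i, (X i : Rz n) ^ (if i = k then 1 else 0)) = X k := by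
  rw [Finset.prod_eq_single k (fun i _ hik => by rw [if_neg hik, pow_zero])
    (fun h => absurd (Finset.mem_univ k) h)]
  rw [if_pos rfl, pow_one]

lemma uv_mem_Dring (k : Fin n) : uv n k ∈ Dring ε := by
  refine ⟨X k, 0, 0, ?_⟩
  rw [dpoly_zero, map_one, mul_one, uv_eq]

lemma uv_inv_mem_Dring (k : Fin n) : (uv n k)⁻¹ ∈ Dring ε := by
  refine ⟨1, (fun i => if i = k then 1 else 0), 0, ?_⟩
  have : dpoly ε (fun i => if i = k then 1 else 0) 0 = X k := by
    rw [dpoly]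
    simp only [Pi.zero_apply, pow_zero, Finset.prod_const_one, mul_one]
    exact single_pow_prod k
  rw [this, ← uv_eq, map_one]
  exact inv_mul_cancel₀ (uv_ne k)

lemma ZY1_mem_Dring (k : Fin n) : ZY A ε 1 k ∈ Dring ε := by
  rcases units_cases ε k with hk | hk
  · refine ⟨Npoly A ε k, (fun i => if i = k then 1 else 0), 0, ?_⟩
    have : dpoly ε (fun i => if i = k then 1 else 0) 0 = X k := by
      rw [dpoly]
      simp only [Pi.zero_apply, pow_zero, Finset.prod_const_one, mul_one]
      exact single_pow_prod k
    rw [this, ZY_one_pos A ε hk, ← uv_eq]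
    exact inv_mul_cancel_right₀ (uv_ne k) _
  · rw [ZY_one_neg A ε hk]
    exact uv_mem_Dring ε k

lemma ZY1_inv_mem_Dring (k : Fin n) : (ZY A ε 1 k)⁻¹ ∈ Dring ε := by
  rcases units_cases ε k with hk | hk
  · refine ⟨X k, 0, (fun j => bexp A j k), ?_⟩
    have hd : dpoly ε 0 (fun j => bexp A j k) = Npoly A ε k := by
      rw [dpoly]
      simp only [Pi.zero_apply, pow_zero, Finset.prod_const_one, one_mul]
      rw [Npoly, filt_eq_Qs ε hk]
    rw [hd, ZY_one_pos A ε hk, ← uv_eq]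
    have h1 : iz n (Npoly A ε k) ≠ 0 := iz_Npoly_ne A ε k
    have h2 : iz n (X k) ≠ 0 := by rw [← uv_eq]; exact uv_ne k
    rw [mul_inv, inv_inv]
    rw [show (iz n (Npoly A ε k))⁻¹ * uv n k * iz n (Npoly A ε k)
        = ((iz n (Npoly A ε k))⁻¹ * iz n (Npoly A ε k)) * uv n k from by ring,
      inv_mul_cancel₀ h1, one_mul]
  · rw [ZY_one_neg A ε hk]
    exact uv_inv_mem_Dring ε k

end YSysAux

namespace YSysAux
open MvPolynomial
variable {n : ℕ} (A : Matrix (Fin n) (Fin n) ℤ) (ε : Fin n → ℤˣ)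

lemma iz_prod_X_pow_ne (e : Fin n → ℕ) : iz n (∏ i, (X i) ^ (e i)) ≠ 0 := by
  refine iz_ne_zero (ne_zero_of_evalOne ?_)
  rw [map_prod]
  have : ∀ i ∈ Finset.univ, evalOne ((X i : Rz n) ^ (e i)) = 1 := by
    intro i _
    rw [map_pow]
    have : evalOne (X i : Rz n) = 1 := by simp [evalOne]
    rw [this, one_pow]
  rw [Finset.prod_congr rfl this, Finset.prod_const_one]
  omega

lemma iz_prod_X_pow_inv_mem (e : Fin n → ℕ) : (iz n (∏ i, (X i) ^ (e i)))⁻¹ ∈ LaurentR n := by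
  rw [map_prod, ← Finset.prod_inv_distrib]
  refine Subring.prod_mem _ fun i _ => ?_
  rw [map_pow, ← inv_pow]
  refine Subring.pow_mem _ ?_ _
  rw [← uv_eq]
  exact uv_inv_mem i

lemma iz_X_add_one_ne (j : Fin n) : iz n ((X j : Rz n) + 1) ≠ 0 := by
  refine iz_ne_zero (ne_zero_of_evalOne ?_)
  rw [evalOne_X_add_one]
  omega

/-- The endgame: an element of `Dring` lying in all the local rings `Oring j`,
`j ∈ Qs`, is an integer Laurent polynomial. -/
lemma endgame : ∀ (N : ℕ) (x : UField n) (a : Rz n) (e m : Fin n → ℕ),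
    (∀ j ∈ Qs ε, x ∈ Oring j) → (∑ j ∈ Qs ε, m j = N) →
    x * iz n (dpoly ε e m) = iz n a → x ∈ LaurentR n := by
  intro N
  induction N using Nat.strong_induction_on with
  | _ N ih =>
    intro x a e m hO hsum heq
    rcases Nat.eq_zero_or_pos N with hN | hN
    · -- no (X j + 1) factors remain
      subst hN
      have hm : ∀ j ∈ Qs ε, m j = 0 :=
        (Finset.sum_eq_zero_iff).1 hsum
      have hd : dpoly ε e m = ∏ i, (X i) ^ (e i) := by
        rw [dpoly,
          Finset.prod_congr (rfl : Qs ε = Qs ε) (fun j hj => by rw [hm j hj, pow_zero]),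
          Finset.prod_const_one, mul_one]
      rw [hd] at heq
      have hx : x = iz n a * (iz n (∏ i, (X i) ^ (e i)))⁻¹ := by
        rw [← heq, mul_assoc, mul_inv_cancel₀ (iz_prod_X_pow_ne e), mul_one]
      rw [hx]
      exact mul_mem (iz_mem a) (iz_prod_X_pow_inv_mem e)
    · -- find a vertex with positive multiplicity and cancel one factor
      have hex : ∃ j₀ ∈ Qs ε, 0 < m j₀ := by
        by_contra hno
        push_neg at hno
        have : ∑ j ∈ Qs ε, m j = 0 :=
          Finset.sum_eq_zero fun j hj => Nat.le_zero.1 (hno j hj)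
        omega
      obtain ⟨j₀, hj₀, hmj₀⟩ := hex
      obtain ⟨c, dd, hdd, hxd⟩ := hO j₀ hj₀
      -- a * dd = c * dpoly
      have had : a * dd = c * dpoly ε e m := by
        apply iz_inj
        rw [map_mul, map_mul, ← heq, ← hxd]
        ring
      have hphia : phi j₀ a = 0 := by
        have h1 := congrArg (phi j₀) had
        rw [map_mul, map_mul] at h1
        have h2 : phi j₀ (dpoly ε e m) = 0 := by
          have h4 : ∏ j ∈ Qs ε, phi j₀ ((X j + 1) ^ (m j)) = 0 :=
            Finset.prod_eq_zero hj₀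
              (by rw [map_pow, phi_X_add_one_self, zero_pow (by omega)])
          rw [dpoly, map_mul, map_prod, map_prod, h4, mul_zero]
        rw [h2, mul_zero] at h1
        rcases mul_eq_zero.1 h1 with h | h
        · exact h
        · exact absurd h hdd
      obtain ⟨a', ha'⟩ := dvd_of_phi_eq_zero hphia
      set m' : Fin n → ℕ := Function.update m j₀ (m j₀ - 1) with hm'
      have hprodm : ∏ j ∈ Qs ε, ((X j : Rz n) + 1) ^ (m j)
          = ((X j₀ : Rz n) + 1) * ∏ j ∈ Qs ε, ((X j : Rz n) + 1) ^ (m' j) := by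
        rw [← Finset.mul_prod_erase _ (fun j => ((X j : Rz n) + 1) ^ (m j)) hj₀,
          ← Finset.mul_prod_erase _ (fun j => ((X j : Rz n) + 1) ^ (m' j)) hj₀,
          ← mul_assoc]
        have h5 : ∏ j ∈ (Qs ε).erase j₀, ((X j : Rz n) + 1) ^ (m' j)
            = ∏ j ∈ (Qs ε).erase j₀, ((X j : Rz n) + 1) ^ (m j) :=
          Finset.prod_congr rfl fun j hj => by
            rw [hm', Function.update_of_ne (Finset.ne_of_mem_erase hj)]
        rw [h5]
        congr 1
        rw [hm', Function.update_self]
        conv_lhs => rw [show m j₀ = (m j₀ - 1) + 1 from by omega]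
        rw [pow_succ']
      have hdp : dpoly ε e m = (X j₀ + 1) * dpoly ε e m' := by
        rw [dpoly, dpoly, hprodm]
        ring
      have hsum' : ∑ j ∈ Qs ε, m' j = N - 1 := by
        rw [hm', Finset.sum_update_of_mem hj₀, Finset.sdiff_singleton_eq_erase]
        rw [← Finset.add_sum_erase _ m hj₀] at hsum
        have h6 : ∀ j ∈ (Qs ε).erase j₀, m' j = m j := fun j hj => by
          rw [hm', Function.update_of_ne (Finset.ne_of_mem_erase hj)]
        omega
      have heq' : x * iz n (dpoly ε e m') = iz n a' := by
        have h3 : x * (iz n (dpoly ε e m') * iz n ((X j₀ : Rz n) + 1))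
            = iz n a' * iz n ((X j₀ : Rz n) + 1) := by
          rw [← map_mul, ← map_mul,
            show a' * ((X j₀ : Rz n) + 1) = a from by rw [ha']; ring,
            show dpoly ε e m' * ((X j₀ : Rz n) + 1) = dpoly ε e m from by rw [hdp]; ring]
          exact heq
        rw [← mul_assoc] at h3
        exact mul_right_cancel₀ (iz_X_add_one_ne j₀) h3
      exact ih (N - 1) (by omega) x a' e m' hO hsum' heq'

end YSysAux

namespace YSysAux
open MvPolynomial
variable {F : Type*} [Field F] [Algebra ℚ F] {n : ℕ}

theorem replace_indep {x : Fin n → F} (hx : AlgebraicIndependent ℚ x) (i₀ : Fin n)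
    {a : F} (ha : a ∈ Algebra.adjoin ℚ (Set.range (x ∘ (Subtype.val : {k : Fin n // k ≠ i₀} → Fin n))))
    (ha0 : a ≠ 0) :
    AlgebraicIndependent ℚ (Function.update x i₀ (a * (x i₀)⁻¹)) := by
  classical
  set ι' := {k : Fin n // k ≠ i₀}
  set e : Option ι' ≃ Fin n :=
    { toFun := fun o => o.elim i₀ Subtype.val
      invFun := fun k => if h : k = i₀ then none else some ⟨k, h⟩
      left_inv := by
        rintro (_ | ⟨k, hk⟩)
        · simp
        · simp [hk]
      right_inv := by intro k; by_cases h : k = i₀ <;> simp [h] }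
  have hx' : AlgebraicIndependent ℚ (x ∘ (Subtype.val : ι' → Fin n)) :=
    hx.comp _ Subtype.val_injective
  have hxe : AlgebraicIndependent ℚ (fun o : Option ι' => o.elim (x i₀) (x ∘ Subtype.val)) := by
    have := hx.comp e e.injective
    convert this using 1
    funext o; rcases o with (_ | ⟨k, hk⟩) <;> rfl
  have htrans : Transcendental (Algebra.adjoin ℚ (Set.range (x ∘ Subtype.val))) (x i₀) :=
    (hx'.option_iff_transcendental (x i₀)).1 hxe
  set K := Algebra.adjoin ℚ (Set.range (x ∘ (Subtype.val : ι' → Fin n)))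
  have hx0 : x i₀ ≠ 0 := by
    intro h
    exact htrans (h ▸ isAlgebraic_zero)
  set c : F := a * (x i₀)⁻¹ with hc
  have hctrans : Transcendental K c := by
    intro halg
    obtain ⟨p, hp0, hp⟩ := halg
    set N := p.natDegree with hN
    set aK : K := ⟨a, ha⟩ with haK
    set q : Polynomial K := ∑ k ∈ Finset.range (N + 1),
      Polynomial.C (p.coeff k * aK ^ k) * Polynomial.X ^ (N - k) with hqdef
    have hq0 : q ≠ 0 := by
      intro h
      have h0 : q.coeff 0 = p.coeff N * aK ^ N := by
        rw [hqdef, Polynomial.finset_sum_coeff]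
        rw [Finset.sum_eq_single N]
        · rw [Nat.sub_self, pow_zero, mul_one, Polynomial.coeff_C_zero]
        · intro k hk hkN
          have hk' : k < N + 1 := Finset.mem_range.1 hk
          have hne : N - k ≠ 0 := by omega
          rw [Polynomial.coeff_C_mul, Polynomial.coeff_X_pow, if_neg (by omega)]
          simp
        · intro h; exact absurd (Finset.self_mem_range_succ N) h
      have hlc : p.coeff N ≠ 0 := Polynomial.leadingCoeff_ne_zero.2 hp0
      apply hlc
      rw [h] at h0
      simp only [Polynomial.coeff_zero] at h0
      have h1 : ((p.coeff N : F) * (a : F) ^ N) = 0 := by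
        have := congrArg (Subtype.val : K → F) h0.symm
        push_cast at this
        simpa [haK] using this
      rcases mul_eq_zero.1 h1 with h2 | h2
      · exact Subtype.ext h2
      · exact absurd h2 (pow_ne_zero _ ha0)
    apply htrans
    refine ⟨q, hq0, ?_⟩
    have key : Polynomial.aeval (x i₀) q = (x i₀) ^ N * Polynomial.aeval c p := by
      rw [Polynomial.aeval_eq_sum_range (p := p), ← hN, Finset.mul_sum, hqdef, map_sum]
      refine Finset.sum_congr rfl ?_
      intro k hk
      have hk' : k ≤ N := Nat.lt_succ_iff.mp (Finset.mem_range.1 hk)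
      rw [map_mul, Polynomial.aeval_C, map_pow, Polynomial.aeval_X, Algebra.smul_def, map_mul,
        map_pow]
      have hval : (algebraMap K F aK) = a := rfl
      have hvalk : (algebraMap K F (p.coeff k)) = ((p.coeff k : F)) := rfl
      rw [hval, hc]
      have hxk : (x i₀) ^ (N - k) * (x i₀) ^ k = (x i₀) ^ N := pow_sub_mul_pow _ hk'
      rw [mul_pow, inv_pow, ← hxk]
      have hxkne : ((x i₀) ^ k) ≠ 0 := pow_ne_zero _ hx0
      field_simp
    rw [key, hp, mul_zero]
  have hupdate : AlgebraicIndependent ℚ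
      (fun o : Option ι' => o.elim c (x ∘ Subtype.val)) := (hx'.option_iff_transcendental c).2 hctrans
  have := hupdate.comp e.symm e.symm.injective
  convert this using 1
  funext k
  by_cases h : k = i₀
  · subst h; simp [e, Function.update_self]
  · simp [e, h, Function.update_of_ne h]

end YSysAux

namespace YSysAux
open MvPolynomial
variable {n : ℕ} (A : Matrix (Fin n) (Fin n) ℤ) (ε : Fin n → ℤˣ)

lemma indep_uv : AlgebraicIndependent ℚ (uv n) := by
  have h : (MvPolynomial.aeval (uv n) : MvPolynomial (Fin n) ℚ →ₐ[ℚ] UField n)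
      = ((IsScalarTower.toAlgHom ℚ (MvPolynomial (Fin n) ℚ) (UField n)).comp
          (MvPolynomial.aeval MvPolynomial.X)) := by
    apply MvPolynomial.algHom_ext
    intro i
    simp [uv]
  unfold AlgebraicIndependent
  rw [h]
  simp only [AlgHom.coe_comp]
  exact (IsFractionRing.injective (MvPolynomial (Fin n) ℚ) (UField n)).comp
    (by rw [MvPolynomial.aeval_X_left]; exact fun a b hh => hh)

/-- Algebraic independence of the cluster at time 1. -/
lemma indep_ZY1 : AlgebraicIndependent ℚ (ZY A ε 1) := by
  classical
  have key : ∀ S : Finset (Fin n), AlgebraicIndependent ℚ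
      (fun k => if k ∈ S ∧ ε k = 1 then ZY A ε 1 k else uv n k) := by
    intro S
    induction S using Finset.induction_on with
    | empty =>
        have he : (fun k : Fin n =>
            if k ∈ (∅ : Finset (Fin n)) ∧ ε k = 1 then ZY A ε 1 k else uv n k) = uv n := by
          funext k; simp
        rw [he]
        exact indep_uv
    | @insert i₀ S hi₀ ih =>
        rcases units_cases ε i₀ with h1 | h1
        · -- genuine replacement at i₀
          set f : Fin n → UField n := fun k => if k ∈ S ∧ ε k = 1 then ZY A ε 1 k else uv n k
            with hf
          have hfi₀ : f i₀ = uv n i₀ := by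
            rw [hf]
            simp [hi₀]
          set a : UField n := iz n (Npoly A ε i₀) with ha
          have hmem : a ∈ Algebra.adjoin ℚ
              (Set.range (f ∘ (Subtype.val : {k : Fin n // k ≠ i₀} → Fin n))) := by
            rw [ha, Npoly, map_prod]
            refine Subalgebra.prod_mem _ fun j hj => ?_
            rw [map_pow]
            refine Subalgebra.pow_mem _ ?_ _
            rw [map_add, map_one, ← uv_eq]
            refine Subalgebra.add_mem _ ?_ (Subalgebra.one_mem _)
            have hji₀ : j ≠ i₀ := by
              intro hh
              subst hh
              rw [pos_eps_of_mem_filt ε h1 hj] at h1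
              exact neg_one_ne_one' h1
            have hfj : f j = uv n j := by
              rw [hf]
              have : ε j = -1 := pos_eps_of_mem_filt ε h1 hj
              simp [this]
            rw [← hfj]
            exact Algebra.subset_adjoin ⟨⟨j, hji₀⟩, rfl⟩
          have hrep := replace_indep ih i₀ hmem (iz_Npoly_ne A ε i₀)
          convert hrep using 1
          funext k
          by_cases hk : k = i₀
          · subst hk
            rw [Function.update_self, hfi₀,
              if_pos (show k ∈ insert k S ∧ ε k = 1 from ⟨Finset.mem_insert_self _ _, h1⟩),
              ZY_one_pos A ε h1, ← ha]
          · rw [Function.update_of_ne hk, hf]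
            simp only [Finset.mem_insert, hk, false_or]
          · rfl
        · -- sign -1 : nothing changes
          convert ih using 1
          funext k
          by_cases hk : k = i₀
          · subst hk
            have : ¬ (ε k = 1) := by rw [h1]; exact neg_one_ne_one'
            simp [this]
          · simp only [Finset.mem_insert, hk, false_or]
  have := key Finset.univ
  convert this using 1
  funext k
  rcases units_cases ε k with h1 | h1
  · simp [h1]
  · have : ¬ (ε k = 1) := by rw [h1]; exact neg_one_ne_one'
    simp only [Finset.mem_univ, true_and, this, if_false]
    exact ZY_one_neg A ε h1

/-- The shift field endomorphism determined by an algebraically independent cluster. -/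
def Phi {v : Fin n → UField n} (hv : AlgebraicIndependent ℚ v) : UField n →+* UField n :=
  IsFractionRing.lift (g := ((MvPolynomial.aeval v :
    MvPolynomial (Fin n) ℚ →ₐ[ℚ] UField n) : MvPolynomial (Fin n) ℚ →+* UField n)) (by exact hv)

lemma Phi_uv {v : Fin n → UField n} (hv : AlgebraicIndependent ℚ v) (k : Fin n) :
    Phi hv (uv n k) = v k := by
  rw [uv, Phi]; refine (IsFractionRing.lift_algebraMap _ _).trans ?_
  simp

lemma sign_cond_iff (k : Fin n) (s : ℕ) :
    (-(ε k) = (-1 : ℤˣ) ^ s) ↔ (ε k = (-1 : ℤˣ) ^ (s + 1)) := by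
  rw [pow_succ, mul_neg_one, neg_eq_iff_eq_neg]

lemma filt_neg (k : Fin n) : filt (fun i => -ε i) k = filt ε k := by
  ext i
  simp only [mem_filt]
  rw [neg_neg, neg_eq_iff_eq_neg]

/-- The fundamental shift identity. -/
lemma ZY_shift (hv : AlgebraicIndependent ℚ (ZY A ε 1)) :
    ∀ (s : ℕ) (k : Fin n), Phi hv (ZY A (fun i => -ε i) s k) = ZY A ε (s + 1) k := by
  intro s
  induction s with
  | zero =>
      intro k
      rw [ZY_zero, Phi_uv]
  | succ s ih =>
      intro k
      rw [ZY_succ A (fun i => -ε i) s k, ZY_succ A ε (s + 1) k]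
      by_cases h : ε k = (-1 : ℤˣ) ^ (s + 1)
      · rw [if_pos ((sign_cond_iff ε k s).2 h), if_pos h]
        rw [map_mul, map_inv₀, ih k, map_prod]
        congr 1
        rw [filt_neg]
        refine Finset.prod_congr rfl fun i _ => ?_
        rw [map_pow, map_add, map_one, ih i]
      · rw [if_neg (fun hh => h ((sign_cond_iff ε k s).1 hh)), if_neg h]
        exact ih k

/-- Transport of Laurent membership along a ring endomorphism. -/
lemma closure_transport (Ψ : UField n →+* UField n) {x : UField n} (hx : x ∈ LaurentR n) :
    Ψ x ∈ Subring.closure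
      (Set.range (fun k => Ψ (uv n k)) ∪ Set.range (fun k => (Ψ (uv n k))⁻¹)) := by
  induction hx using Subring.closure_induction with
  | mem y hy =>
      rcases hy with ⟨k, rfl⟩ | ⟨k, rfl⟩
      · exact Subring.subset_closure (Or.inl ⟨k, rfl⟩)
      · rw [map_inv₀]
        exact Subring.subset_closure (Or.inr ⟨k, rfl⟩)
  | one => rw [map_one]; exact one_mem _
  | zero => rw [map_zero]; exact zero_mem _
  | add x y _ _ hx hy => rw [map_add]; exact add_mem hx hy
  | mul x y _ _ hx hy => rw [map_mul]; exact mul_mem hx hy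
  | neg x _ hx => rw [map_neg]; exact neg_mem hx

end YSysAux

namespace YSysAux
open MvPolynomial
variable {n : ℕ} (A : Matrix (Fin n) (Fin n) ℤ) (ε : Fin n → ℤˣ)

lemma mem_Dring_iff {x : UField n} :
    x ∈ Dring ε ↔ ∃ (a : Rz n) (e m : Fin n → ℕ), x * iz n (dpoly ε e m) = iz n a :=
  Iff.rfl

lemma iz_XUden_inv_mem (k : Fin n) : (iz n (X k * Uden A ε k))⁻¹ ∈ LaurentR n := by
  rw [map_mul, mul_inv]
  refine mul_mem ?_ ?_
  · rw [← uv_eq]; exact uv_inv_mem k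
  · rw [Uden, map_prod, ← Finset.prod_inv_distrib]
    refine Subring.prod_mem _ fun i _ => ?_
    rw [map_pow, ← inv_pow]
    refine Subring.pow_mem _ ?_ _
    rw [← uv_eq]
    exact uv_inv_mem i

/-- The Laurent phenomenon, main induction. -/
lemma main (hsw : ∀ i j : Fin n, 0 < bexp A i j → 0 < bexp A j i) :
    ∀ (t : ℕ) (ε : Fin n → ℤˣ) (k : Fin n), ZY A ε t k ∈ LaurentR n := by
  intro t
  induction t using Nat.strong_induction_on with
  | _ t ih =>
    rcases t with (_ | _ | _ | s)
    · intro ε k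
      exact uv_mem k
    · intro ε k
      rcases units_cases ε k with h | h
      · rw [ZY_one_pos A ε h]
        exact mul_mem (iz_mem _) (uv_inv_mem k)
      · rw [ZY_one_neg A ε h]
        exact uv_mem k
    · intro ε k
      rcases units_cases ε k with h | h
      · rw [ZY_two_pos A ε h, ZY_one_pos A ε h]
        exact mul_mem (iz_mem _) (uv_inv_mem k)
      · rw [ZY_two_neg A ε h]
        exact mul_mem (iz_mem _) (iz_XUden_inv_mem A ε k)
    · intro ε k
      set ε' : Fin n → ℤˣ := fun i => -ε i with hε'
      have hne : (fun i => -ε' i) = ε := funext fun i => neg_neg _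
      have hv := indep_ZY1 A ε
      have hv' := indep_ZY1 A ε'
      have shift1 : ∀ (r : ℕ) (k : Fin n), Phi hv (ZY A ε' r k) = ZY A ε (r + 1) k :=
        ZY_shift A ε hv
      have shift2 : ∀ (r : ℕ) (k : Fin n), Phi hv' (ZY A ε r k) = ZY A ε' (r + 1) k := by
        have h0 := ZY_shift A ε' hv'
        rwa [hne] at h0
      -- membership in `Dring`
      have hxD : ZY A ε (s + 3) k ∈ Dring ε := by
        have h1 : ZY A ε (s + 3) k = Phi hv (ZY A ε' (s + 2) k) := (shift1 (s + 2) k).symm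
        have h2 : ZY A ε' (s + 2) k ∈ LaurentR n := ih (s + 2) (by omega) ε' k
        have h3 := closure_transport (Phi hv) h2
        have hfa : (fun k' => Phi hv (uv n k')) = ZY A ε 1 := funext fun k' => Phi_uv hv k'
        have hfb : (fun k' => (Phi hv (uv n k'))⁻¹) = fun k' => (ZY A ε 1 k')⁻¹ := by
          funext k'; rw [Phi_uv hv k']
        rw [hfa, hfb] at h3
        rw [h1]
        refine Subring.closure_le.2 ?_ h3
        rintro y (⟨k', rfl⟩ | ⟨k', rfl⟩)
        · exact ZY1_mem_Dring A ε k'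
        · exact ZY1_inv_mem_Dring A ε k'
      -- membership in the local rings
      have hxO : ∀ j ∈ Qs ε, ZY A ε (s + 3) k ∈ Oring j := by
        intro j hj
        have h1 : ZY A ε (s + 3) k
            = ((Phi hv).comp ((Phi hv').comp (Phi hv))) (ZY A ε' s k) := by
          show _ = Phi hv (Phi hv' (Phi hv (ZY A ε' s k)))
          rw [shift1 s k, shift2 (s + 1) k, shift1 (s + 2) k]
        have h2 : ZY A ε' s k ∈ LaurentR n := ih s (by omega) ε' k
        have h3 := closure_transport ((Phi hv).comp ((Phi hv').comp (Phi hv))) h2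
        have hgen : ∀ k', ((Phi hv).comp ((Phi hv').comp (Phi hv))) (uv n k')
            = ZY A ε 3 k' := by
          intro k'
          show Phi hv (Phi hv' (Phi hv (uv n k'))) = _
          rw [Phi_uv hv k', shift2 1 k', shift1 2 k']
        have hfa : (fun k' => ((Phi hv).comp ((Phi hv').comp (Phi hv))) (uv n k'))
            = ZY A ε 3 := funext hgen
        have hfb : (fun k' => (((Phi hv).comp ((Phi hv').comp (Phi hv))) (uv n k'))⁻¹)
            = fun k' => (ZY A ε 3 k')⁻¹ := by
          funext k'; rw [hgen k']
        rw [hfa, hfb] at h3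
        rw [h1]
        refine Subring.closure_le.2 ?_ h3
        rintro y (⟨k', rfl⟩ | ⟨k', rfl⟩)
        · exact (ZY3_mem_Oring A ε hsw ((mem_Qs ε).1 hj) k').1
        · exact (ZY3_mem_Oring A ε hsw ((mem_Qs ε).1 hj) k').2
      rw [mem_Dring_iff] at hxD
      obtain ⟨a, e, m, heq⟩ := hxD
      exact endgame ε (∑ j ∈ Qs ε, m j) _ a e m hxO rfl heq

end YSysAux

namespace YSysAux
open MvPolynomial
variable {n : ℕ} (A : Matrix (Fin n) (Fin n) ℤ) (ε : Fin n → ℤˣ)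

/-- The downward system is the upward system for the opposite sign function. -/
lemma VY_eq_ZY : ∀ s : ℕ, VY A ε (s + 1) = ZY A (fun i => -ε i) s := by
  intro s
  induction s with
  | zero => rfl
  | succ s ih =>
      funext j
      have hL : VY A ε (s + 2) j = if ε j = (-1 : ℤˣ) ^ (s + 1) then
          (VY A ε (s + 1) j)⁻¹ *
            ∏ i ∈ filt ε j, (VY A ε (s + 1) i + 1) ^ bexp A i j
        else VY A ε (s + 1) j := rfl
      have hR : ZY A (fun i => -ε i) (s + 1) j = if (fun i => -ε i) j = (-1 : ℤˣ) ^ s then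
          (ZY A (fun i => -ε i) s j)⁻¹ *
            ∏ i ∈ filt (fun i => -ε i) j, (ZY A (fun i => -ε i) s i + 1) ^ bexp A i j
        else ZY A (fun i => -ε i) s j := rfl
      rw [hL, hR, ih, filt_neg]
      by_cases h : ε j = (-1 : ℤˣ) ^ (s + 1)
      · rw [if_pos h, if_pos ((sign_cond_iff ε j s).2 h)]
      · rw [if_neg h, if_neg (fun hh => h ((sign_cond_iff ε j s).1 hh))]

end YSysAux


open YSysAux in
/-- In the `Y`-system associated with a symmetrizable generalized
Cartan matrix `A` with bipartite Coxeter graph, every `y_{j;m}` with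
`ε j = (−1)^{m−1}` is an integer Laurent polynomial in the initial data. -/
theorem Y_system_laurent_phenomenon (n : ℕ)
    (A : Matrix (Fin n) (Fin n) ℤ)
    (hdiag : ∀ i, A i i = 2) (hoff : ∀ i j, i ≠ j → A i j ≤ 0)
    (d : Fin n → ℤ) (hd : ∀ i, 0 < d i)
    (hsym : ∀ i j, d i * A i j = d j * A j i)
    (ε : Fin n → ℤˣ) (hbip : ∀ i j, A i j < 0 → ε i = -ε j) :
    ∀ (m : ℤ) (j : Fin n), ε j = (-1 : ℤˣ) ^ (m - 1) →
      Ysys A ε m j ∈ Subring.closure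
        (Set.range (uv n) ∪ Set.range (fun j => (uv n j)⁻¹)) := by
  intro m j _
  have hsw : ∀ i j : Fin n, 0 < bexp A i j → 0 < bexp A j i := by
    intro i j h
    have h1 : A i j < 0 := by
      by_contra h'
      push_neg at h'
      have : bexp A i j = 0 := by
        rw [bexp]
        omega
      omega
    have h2 : A j i < 0 := by
      by_contra h'
      push_neg at h'
      have hh1 : d i * A i j < 0 := mul_neg_of_pos_of_neg (hd i) h1
      have hh2 : 0 ≤ d j * A j i := mul_nonneg (le_of_lt (hd j)) h'
      rw [hsym i j] at hh1
      omega
    rw [bexp]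
    omega
  show Ysys A ε m j ∈ LaurentR n
  rw [Ysys]
  by_cases hm : 0 ≤ m
  · rw [if_pos hm]
    exact main A hsw m.toNat ε j
  · rw [if_neg hm]
    have h1 : (-m).toNat = ((-m).toNat - 1) + 1 := by omega
    rw [h1, VY_eq_ZY]
    exact main A hsw ((-m).toNat - 1) (fun i => -ε i) j

end
end
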